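/- arXiv:1803.08157 — 8 statements merged into one kernel-verified Lean document; each statement's English description precedes it below -/
import Mathlib

section
/- Let Q₁, Q₂ be real symmetric positive definite d×d matrices, and for β > 0 define Q(β) := (1 + 1/β)Q₁ + (1 + β)Q₂. Let λ₁,…,λ_d > 0 be the eigenvalues (with multiplicity) of the symmetric positive definite matrix Q₂^{1/2} Q₁⁻¹ Q₂^{1/2}. Then for every β > 0, the derivative of β ↦ log det Q(β) equals −(1/(β(1+β))) · Σ_{i=1}^{d} (1 − β²λᵢ)/(1 + βλᵢ). -/
open Matrix

section OldSqrt

open scoped ComplexOrder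

/-- The square root of a positive semidefinite matrix, as `Matrix.PosSemidef.sqrt` was defined
in Mathlib of December 2024 (removed since then). -/
noncomputable def Matrix.PosSemidef.sqrt {n : Type*} [Fintype n] [DecidableEq n] {𝕜 : Type*} [RCLike 𝕜]
    {A : Matrix n n 𝕜} (hA : A.PosSemidef) : Matrix n n 𝕜 :=
  hA.1.eigenvectorUnitary.1 * diagonal ((↑) ∘ Real.sqrt ∘ hA.1.eigenvalues) *
    (star hA.1.eigenvectorUnitary : Matrix n n 𝕜)

end OldSqrt

lemma oldsqrt_mul_self {n : Type*} [Fintype n] [DecidableEq n] {A : Matrix n n ℝ}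
    (hA : A.PosSemidef) : hA.sqrt * hA.sqrt = A := by
  have h1 : (star hA.1.eigenvectorUnitary : Matrix n n ℝ) * hA.1.eigenvectorUnitary.1 = 1 :=
    (Matrix.mem_unitaryGroup_iff').mp hA.1.eigenvectorUnitary.2
  have hspec : A = hA.1.eigenvectorUnitary.1 * diagonal hA.1.eigenvalues
      * (star hA.1.eigenvectorUnitary : Matrix n n ℝ) := by
    simpa [RCLike.ofReal_real_eq_id] using hA.1.spectral_theorem
  have hD : diagonal ((RCLike.ofReal : ℝ → ℝ) ∘ Real.sqrt ∘ hA.1.eigenvalues)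
      * diagonal ((RCLike.ofReal : ℝ → ℝ) ∘ Real.sqrt ∘ hA.1.eigenvalues) = diagonal hA.1.eigenvalues := by
    rw [diagonal_mul_diagonal]; congr 1; funext i
    simp [Real.mul_self_sqrt (hA.eigenvalues_nonneg i)]
  unfold Matrix.PosSemidef.sqrt
  simp only [Matrix.mul_assoc]
  rw [← Matrix.mul_assoc (star hA.1.eigenvectorUnitary : Matrix n n ℝ), h1, Matrix.one_mul,
    ← Matrix.mul_assoc (diagonal _) (diagonal _), hD, ← Matrix.mul_assoc]
  exact hspec.symm

lemma oldsqrt_isHermitian {n : Type*} [Fintype n] [DecidableEq n] {A : Matrix n n ℝ}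
    (hA : A.PosSemidef) : (hA.sqrt)ᴴ = hA.sqrt := by
  unfold Matrix.PosSemidef.sqrt
  simp [Matrix.conjTranspose_mul, Matrix.mul_assoc, Matrix.star_eq_conjTranspose,
    Matrix.conjTranspose_eq_transpose_of_trivial]

/-- det of `a•1 + c•M` for Hermitian real `M` equals product over eigenvalues. -/
lemma det_smul_one_add_smul_aux {d : ℕ} {M : Matrix (Fin d) (Fin d) ℝ}
    (hM : M.IsHermitian) (a c : ℝ) :
    (a • (1 : Matrix (Fin d) (Fin d) ℝ) + c • M).det = ∏ i, (a + c * hM.eigenvalues i) := by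
  set U : Matrix (Fin d) (Fin d) ℝ := ↑(hM.eigenvectorUnitary) with hU
  have hUU : U * star U = 1 := (Matrix.mem_unitaryGroup_iff).mp hM.eigenvectorUnitary.2
  have hspec : M = U * diagonal hM.eigenvalues * star U := by
    have := hM.spectral_theorem
    simpa [RCLike.ofReal_real_eq_id] using this
  have hdiag : a • (1 : Matrix (Fin d) (Fin d) ℝ) + c • diagonal hM.eigenvalues
      = diagonal (fun i => a + c * hM.eigenvalues i) := by
    ext i j
    by_cases h : i = j <;>
      simp [Matrix.one_apply, Matrix.diagonal_apply, h]
  have key : a • (1 : Matrix (Fin d) (Fin d) ℝ) + c • M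
      = U * diagonal (fun i => a + c * hM.eigenvalues i) * star U := by
    have h1 : (1 : Matrix (Fin d) (Fin d) ℝ) = U * 1 * star U := by rw [mul_one, hUU]
    calc a • (1 : Matrix (Fin d) (Fin d) ℝ) + c • M
        = U * (a • 1 + c • diagonal hM.eigenvalues) * star U := by
          rw [mul_add, add_mul]
          congr 1
          · rw [mul_smul_comm, smul_mul_assoc, ← h1]
          · rw [mul_smul_comm, smul_mul_assoc, ← hspec]
      _ = U * diagonal (fun i => a + c * hM.eigenvalues i) * star U := by rw [hdiag]
  have hdetU : U.det * (star U).det = 1 := by rw [← det_mul, hUU, det_one]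
  rw [key, det_mul, det_mul, det_diagonal]
  calc U.det * (∏ i, (a + c * hM.eigenvalues i)) * (star U).det
      = (∏ i, (a + c * hM.eigenvalues i)) * (U.det * (star U).det) := by ring
    _ = ∏ i, (a + c * hM.eigenvalues i) := by rw [hdetU, mul_one]

/-- For real symmetric positive definite `d × d` matrices `Q₁, Q₂`, with
`Q(β) := (1 + 1/β) Q₁ + (1 + β) Q₂` and `λ₁, …, λ_d` the eigenvalues (with multiplicity) of
`Q₂^{1/2} * Q₁⁻¹ * Q₂^{1/2}`, the derivative of `β ↦ log det Q(β)` at any `β > 0` equals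
`-(1/(β(1+β))) * ∑ i, (1 - β²λᵢ)/(1 + βλᵢ)`. -/
theorem deriv_logdet_Q
    (d : ℕ) (Q₁ Q₂ : Matrix (Fin d) (Fin d) ℝ)
    (hQ₁ : Q₁.PosDef) (hQ₂ : Q₂.PosDef)
    (hM : (hQ₂.posSemidef.sqrt * Q₁⁻¹ * hQ₂.posSemidef.sqrt).IsHermitian)
    (lam : Fin d → ℝ) (hlam : lam = hM.eigenvalues)
    (β : ℝ) (hβ : 0 < β) :
    HasDerivAt (fun b : ℝ => Real.log ((1 + 1 / b) • Q₁ + (1 + b) • Q₂).det)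
      (-(1 / (β * (1 + β))) * ∑ i, (1 - β ^ 2 * lam i) / (1 + β * lam i)) β := by
  set S : Matrix (Fin d) (Fin d) ℝ := hQ₂.posSemidef.sqrt with hSdef
  set M : Matrix (Fin d) (Fin d) ℝ := S * Q₁⁻¹ * S with hMdef
  have hSS : S * S = Q₂ := oldsqrt_mul_self hQ₂.posSemidef
  have hdetQ₂ : 0 < Q₂.det := hQ₂.det_pos
  have hdetS : IsUnit S.det := by
    have h2 : S.det * S.det = Q₂.det := by rw [← det_mul, hSS]
    refine isUnit_iff_ne_zero.mpr fun h => ?_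
    rw [h, zero_mul] at h2; exact hdetQ₂.ne h2
  have hdetQ₁ : 0 < Q₁.det := hQ₁.det_pos
  have hdetM : 0 < M.det := by
    rw [hMdef, det_mul, det_mul, det_nonsing_inv, Ring.inverse_eq_inv']
    have h2 : S.det * S.det = Q₂.det := by rw [← det_mul, hSS]
    nlinarith [inv_pos.mpr hdetQ₁]
  -- eigenvalues are nonnegative
  have hSh : Sᴴ = S := oldsqrt_isHermitian hQ₂.posSemidef
  have hMpsd : M.PosSemidef := by
    have := (hQ₁.inv.posSemidef).mul_mul_conjTranspose_same S
    rwa [hSh] at this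
  have hlamnn : ∀ i, 0 ≤ lam i := by
    intro i; rw [hlam]; exact hMpsd.eigenvalues_nonneg i
  have hprod : M.det = ∏ i, lam i := by
    rw [hlam]
    simpa [RCLike.ofReal_real_eq_id] using hM.det_eq_prod_eigenvalues
  have hprodpos : 0 < ∏ i, lam i := hprod ▸ hdetM
  set K : ℝ := Q₂.det / M.det with hK
  have hKpos : 0 < K := div_pos hdetQ₂ hdetM
  -- S * M⁻¹ * S = Q₁
  have hSMS : S * M⁻¹ * S = Q₁ := by
    rw [hMdef, Matrix.mul_inv_rev, Matrix.mul_inv_rev,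
      Matrix.nonsing_inv_nonsing_inv _ hdetQ₁.ne'.isUnit]
    calc S * (S⁻¹ * (Q₁ * S⁻¹)) * S = S * S⁻¹ * Q₁ * (S⁻¹ * S) := by
          simp only [Matrix.mul_assoc]
      _ = Q₁ := by rw [Matrix.mul_nonsing_inv _ hdetS, Matrix.nonsing_inv_mul _ hdetS,
          one_mul, mul_one]
  -- determinant formula for b > 0
  have hdetformula : ∀ a c : ℝ, ((a • Q₁ + c • Q₂)).det = K * ∏ i, (a + c * lam i) := by
    intro a c
    have hfact : a • Q₁ + c • Q₂ = S * (a • M⁻¹ + c • 1) * S := by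
      rw [mul_add, add_mul, mul_smul_comm, smul_mul_assoc, mul_smul_comm, smul_mul_assoc,
        hSMS, mul_one, hSS]
    have hinner : (a • M⁻¹ + c • (1 : Matrix (Fin d) (Fin d) ℝ)) * M
        = a • (1 : Matrix (Fin d) (Fin d) ℝ) + c • M := by
      rw [add_mul, smul_mul_assoc, smul_mul_assoc, Matrix.nonsing_inv_mul _ hdetM.ne'.isUnit,
        one_mul]
    have hdet1 : (a • M⁻¹ + c • (1 : Matrix (Fin d) (Fin d) ℝ)).det * M.det
        = ∏ i, (a + c * lam i) := by
      rw [← det_mul, hinner, hlam]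
      exact det_smul_one_add_smul_aux hM a c
    have hdet2 : (a • M⁻¹ + c • (1 : Matrix (Fin d) (Fin d) ℝ)).det
        = (∏ i, (a + c * lam i)) / M.det := by
      rw [eq_div_iff hdetM.ne']
      exact hdet1
    rw [hfact, det_mul, det_mul, hdet2, hK]
    have h2 : S.det * S.det = Q₂.det := by rw [← det_mul, hSS]
    calc S.det * ((∏ i, (a + c * lam i)) / M.det) * S.det
        = (S.det * S.det) * (∏ i, (a + c * lam i)) / M.det := by ring
      _ = Q₂.det / M.det * ∏ i, (a + c * lam i) := by rw [h2]; ring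
  -- define the model function
  set g : ℝ → ℝ := fun b => Real.log K + ∑ i, Real.log (1 + 1 / b + (1 + b) * lam i) with hg
  have hfactorpos : ∀ b : ℝ, 0 < b → ∀ i, 0 < 1 + 1 / b + (1 + b) * lam i := by
    intro b hb i
    have h1 : 0 < 1 + 1 / b := by positivity
    have h2 : 0 ≤ (1 + b) * lam i := mul_nonneg (by linarith) (hlamnn i)
    linarith
  have heq : ∀ b : ℝ, 0 < b →
      Real.log ((1 + 1 / b) • Q₁ + (1 + b) • Q₂).det = g b := by
    intro b hb
    rw [hdetformula, Real.log_mul hKpos.ne' (Finset.prod_pos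
      (fun i _ => hfactorpos b hb i)).ne', Real.log_prod]
    intro i _
    exact (hfactorpos b hb i).ne'
  -- derivative of g
  have hgder : HasDerivAt g
      (∑ i, (-(1 / β ^ 2) + lam i) / (1 + 1 / β + (1 + β) * lam i)) β := by
    have : HasDerivAt (fun b : ℝ => ∑ i : Fin d, Real.log (1 + 1 / b + (1 + b) * lam i))
        (∑ i, (-(1 / β ^ 2) + lam i) / (1 + 1 / β + (1 + β) * lam i)) β := by
      apply HasDerivAt.fun_sum
      intro i _
      have hinner : HasDerivAt (fun b : ℝ => 1 + 1 / b + (1 + b) * lam i)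
          (-(1 / β ^ 2) + lam i) β := by
        have h1 : HasDerivAt (fun b : ℝ => 1 + 1 / b) (-(1 / β ^ 2)) β := by
          simpa [one_div] using ((hasDerivAt_inv hβ.ne').const_add 1)
        have h2 : HasDerivAt (fun b : ℝ => (1 + b) * lam i) (lam i) β := by
          simpa using ((hasDerivAt_id β).const_add 1).mul_const (lam i)
        exact h1.add h2
      exact hinner.log (hfactorpos β hβ i).ne'
    simpa [hg] using (this.const_add (Real.log K))
  -- conclude via eventual equality
  have hEventually : (fun b : ℝ => Real.log ((1 + 1 / b) • Q₁ + (1 + b) • Q₂).det) =ᶠ[nhds β] g := by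
    filter_upwards [IsOpen.mem_nhds isOpen_Ioi hβ] with b hb
    exact heq b hb
  have hfinal : HasDerivAt (fun b : ℝ => Real.log ((1 + 1 / b) • Q₁ + (1 + b) • Q₂).det)
      (∑ i, (-(1 / β ^ 2) + lam i) / (1 + 1 / β + (1 + β) * lam i)) β :=
    hgder.congr_of_eventuallyEq hEventually
  convert hfinal using 1
  rw [Finset.mul_sum]
  apply Finset.sum_congr rfl
  intro i _
  have h1 : (0:ℝ) < 1 + β * lam i := by
    have := mul_nonneg hβ.le (hlamnn i); linarith
  have h2 : (0:ℝ) < 1 + 1 / β + (1 + β) * lam i := hfactorpos β hβ i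
  have e1 : β ≠ 0 := hβ.ne'
  have e2 : (1 + β : ℝ) ≠ 0 := by positivity
  have e3 : (1 + β * lam i : ℝ) ≠ 0 := h1.ne'
  have e4 : (1 + 1 / β + (1 + β) * lam i : ℝ) ≠ 0 := h2.ne'
  have hln : 0 ≤ lam i := hlamnn i
  have hD : (β ^ 2 + β ^ 3 + β ^ 3 * lam i + β ^ 4 * lam i : ℝ) ≠ 0 := by positivity
  field_simp [hD]
  ring
end

section
/- Let Q₁, Q₂ be real symmetric positive definite d×d matrices, and for β > 0 define Q(β) := (1 + 1/β)Q₁ + (1 + β)Q₂. Let λ₁,…,λ_d > 0 be the eigenvalues (with multiplicity) of Q₂^{1/2} Q₁⁻¹ Q₂^{1/2}. If β₊ > 0 satisfies Σ_{i=1}^{d} (1 − β₊²λᵢ)/(1 + β₊λᵢ) = 0, then the second derivative of β ↦ log det Q(β) at β₊ equals (1/(β₊(1+β₊))) · Σ_{i=1}^{d} (β₊²λᵢ² + (1+2β₊)λᵢ)/(1 + β₊λᵢ)², which is strictly positive; hence β₊ is a strict local minimum of β ↦ log det Q(β). -/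
open Matrix
open Matrix
open scoped MatrixOrder

lemma aux_posdef_M (d : ℕ) (Q₁ Q₂ : Matrix (Fin d) (Fin d) ℝ)
    (hQ₁ : Q₁.PosDef) (hQ₂ : Q₂.PosDef) :
    (CFC.sqrt Q₂ * Q₁⁻¹ * CFC.sqrt Q₂).PosDef := by
  set S := CFC.sqrt Q₂ with hSdef
  have hSherm : S.IsHermitian := IsSelfAdjoint.of_nonneg (CFC.sqrt_nonneg Q₂)
  have hSS : S * S = Q₂ := CFC.sqrt_mul_sqrt_self Q₂ hQ₂.posSemidef.nonneg
  have hdetS : IsUnit S.det := by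
    have : S.det * S.det = Q₂.det := by rw [← det_mul, hSS]
    have h2 : Q₂.det ≠ 0 := hQ₂.det_pos.ne'
    exact isUnit_iff_ne_zero.mpr (fun h => h2 (by rw [← this, h, zero_mul]))
  have hinj : Function.Injective (S.mulVec) := (mulVec_injective_iff_isUnit.mpr
    (isUnit_iff_isUnit_det _ |>.mpr hdetS))
  refine PosDef.of_dotProduct_mulVec_pos ?_ (fun x hx => ?_)
  · have : (S * Q₁⁻¹ * S)ᴴ = S * Q₁⁻¹ * S := by
      rw [conjTranspose_mul, conjTranspose_mul, hSherm.eq, hQ₁.inv.isHermitian.eq, mul_assoc]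
    exact this
  · have hSx : S *ᵥ x ≠ 0 := fun h => hx (hinj (by simpa using h))
    have := hQ₁.inv.dotProduct_mulVec_pos hSx
    have hrw : dotProduct (star x) ((S * Q₁⁻¹ * S) *ᵥ x)
        = dotProduct (star (S *ᵥ x)) (Q₁⁻¹ *ᵥ (S *ᵥ x)) := by
      have hST : Sᵀ = S := by
        rw [← conjTranspose_eq_transpose_of_trivial, hSherm.eq]
      rw [← mulVec_mulVec, ← mulVec_mulVec, dotProduct_mulVec (star x) S]
      simp only [star_trivial]
      nth_rewrite 1 [← hST]
      rw [vecMul_transpose]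
    rw [hrw]
    exact this

lemma aux_det (d : ℕ) (Q₁ Q₂ : Matrix (Fin d) (Fin d) ℝ)
    (hQ₁ : Q₁.PosDef) (hQ₂ : Q₂.PosDef)
    (hM : (CFC.sqrt Q₂ * Q₁⁻¹ * CFC.sqrt Q₂).IsHermitian) (u v : ℝ) :
    (u • Q₁ + v • Q₂).det = Q₁.det * ∏ i, (u + v * hM.eigenvalues i) := by
  set S := CFC.sqrt Q₂ with hSdef
  set M := S * Q₁⁻¹ * S with hMdef
  have hSS : S * S = Q₂ := CFC.sqrt_mul_sqrt_self Q₂ hQ₂.posSemidef.nonneg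
  have hdetS : IsUnit S.det := by
    have h : S.det * S.det = Q₂.det := by rw [← det_mul, hSS]
    exact isUnit_iff_ne_zero.mpr
      (fun h0 => hQ₂.det_pos.ne' (by rw [← h, h0, zero_mul]))
  have hdetQ₁ : IsUnit Q₁.det := hQ₁.det_pos.ne'.isUnit
  have hSinv : S⁻¹ * S = 1 := nonsing_inv_mul S hdetS
  have step1 : u • Q₁ + v • Q₂ = Q₁ * (u • (1 : Matrix (Fin d) (Fin d) ℝ) + v • (Q₁⁻¹ * Q₂)) := by
    rw [Matrix.mul_add, Matrix.mul_smul, Matrix.mul_smul, Matrix.mul_one,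
      ← Matrix.mul_assoc, mul_nonsing_inv Q₁ hdetQ₁, Matrix.one_mul]
  have step2 : S⁻¹ * M * S = Q₁⁻¹ * Q₂ := by
    rw [hMdef, ← hSS]
    calc S⁻¹ * (S * Q₁⁻¹ * S) * S = S⁻¹ * S * (Q₁⁻¹ * (S * S)) := by
          simp only [Matrix.mul_assoc]
      _ = Q₁⁻¹ * (S * S) := by rw [hSinv, Matrix.one_mul]
  have step3 : u • (1 : Matrix (Fin d) (Fin d) ℝ) + v • (S⁻¹ * M * S)
      = S⁻¹ * (u • (1 : Matrix (Fin d) (Fin d) ℝ) + v • M) * S := by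
    rw [Matrix.mul_add, Matrix.add_mul, Matrix.mul_smul, Matrix.mul_smul,
      Matrix.smul_mul, Matrix.smul_mul, Matrix.mul_one, hSinv, Matrix.mul_assoc]
  have step5 : (u • (1 : Matrix (Fin d) (Fin d) ℝ) + v • M).det
      = ∏ i, (u + v * hM.eigenvalues i) := by
    set U : Matrix (Fin d) (Fin d) ℝ := (IsHermitian.eigenvectorUnitary hM : Matrix (Fin d) (Fin d) ℝ) with hUdef
    have hU : U * star U = 1 := (Matrix.mem_unitaryGroup_iff).mp (IsHermitian.eigenvectorUnitary hM).2
    have hspec : M = U * diagonal (RCLike.ofReal ∘ hM.eigenvalues) * star U :=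
      hM.spectral_theorem
    have hD : diagonal (fun i => u + v * hM.eigenvalues i)
        = u • (1 : Matrix (Fin d) (Fin d) ℝ) + v • diagonal (RCLike.ofReal ∘ hM.eigenvalues) := by
      ext i j
      by_cases h : i = j <;> simp [h, diagonal, Matrix.one_apply]
    have key : U * diagonal (fun i => u + v * hM.eigenvalues i) * star U
        = u • (1 : Matrix (Fin d) (Fin d) ℝ) + v • M := by
      rw [hD, Matrix.mul_add, Matrix.add_mul, Matrix.mul_smul, Matrix.smul_mul,
        Matrix.mul_one, hU, Matrix.mul_smul, Matrix.smul_mul, ← hspec]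
    rw [← key, det_mul, det_mul]
    have h2 : U.det * (diagonal (fun i => u + v * hM.eigenvalues i)).det * (star U).det
        = (U * star U).det * (diagonal (fun i => u + v * hM.eigenvalues i)).det := by
      rw [det_mul]; ring
    rw [h2, hU, det_one, one_mul, det_diagonal]
  rw [step1, det_mul, ← step2, step3, det_mul, det_mul, step5]
  have h3 : S⁻¹.det * (∏ i, (u + v * hM.eigenvalues i)) * S.det
      = (S⁻¹.det * S.det) * ∏ i, (u + v * hM.eigenvalues i) := by ring
  have hdetSinv : S⁻¹.det * S.det = 1 := by rw [← det_mul, hSinv, det_one]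
  rw [h3, hdetSinv, one_mul]

lemma aux_analysis (d : ℕ) (hd : 1 ≤ d) (lam : Fin d → ℝ) (hlam : ∀ i, 0 < lam i)
    (βp : ℝ) (hβp : 0 < βp)
    (hcrit : ∑ i, (1 - βp ^ 2 * lam i) / (1 + βp * lam i) = 0)
    (C : ℝ) (hC : 0 < C) (F : ℝ → ℝ)
    (hF : ∀ b : ℝ, 0 < b → F b = Real.log (C * ∏ i, (1 + 1/b + (1 + b) * lam i))) :
    deriv (deriv F) βp
      = (1 / (βp * (1 + βp)))
        * ∑ i, (βp ^ 2 * lam i ^ 2 + (1 + 2 * βp) * lam i) / (1 + βp * lam i) ^ 2 ∧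
    0 < (1 / (βp * (1 + βp)))
        * ∑ i, (βp ^ 2 * lam i ^ 2 + (1 + 2 * βp) * lam i) / (1 + βp * lam i) ^ 2 ∧
    ∃ ε > 0, ∀ b : ℝ, b ≠ βp → |b - βp| < ε → F βp < F b := by
  have hβ1 : (0:ℝ) < 1 + βp := by linarith
  set T : ℝ := (1 / (βp * (1 + βp)))
        * ∑ i, (βp ^ 2 * lam i ^ 2 + (1 + 2 * βp) * lam i) / (1 + βp * lam i) ^ 2 with hTdef
  set g : ℝ → ℝ := fun b => Real.log C + ∑ i, Real.log (1 + b⁻¹ + (1 + b) * lam i) with hgdef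
  set h : ℝ → ℝ := fun b => ∑ i, (lam i - (b ^ 2)⁻¹) / (1 + b⁻¹ + (1 + b) * lam i) with hhdef
  have hf_pos : ∀ b : ℝ, 0 < b → ∀ i, 0 < 1 + b⁻¹ + (1 + b) * lam i := by
    intro b hb i
    have h1 : 0 < (1 + b) * lam i := mul_pos (by linarith) (hlam i)
    have h2 : 0 < b⁻¹ := inv_pos.mpr hb
    linarith
  have hP_pos : ∀ i, 0 < 1 + βp * lam i := fun i => by
    have := mul_pos hβp (hlam i); linarith
  have hf_eq : ∀ i, 1 + βp⁻¹ + (1 + βp) * lam i = (1 + βp) * (1 + βp * lam i) / βp := by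
    intro i
    field_simp
    ring
  -- derivative of g is h on Ioi 0
  have hgd : ∀ b ∈ Set.Ioi (0:ℝ), HasDerivAt g (h b) b := by
    intro b hb
    have hb' : (0:ℝ) < b := hb
    apply HasDerivAt.const_add
    apply HasDerivAt.fun_sum
    intro i _
    have hfd : HasDerivAt (fun y : ℝ => 1 + y⁻¹ + (1 + y) * lam i) (lam i - (b ^ 2)⁻¹) b := by
      have h1 : HasDerivAt (fun y : ℝ => y⁻¹) (-(b ^ 2)⁻¹) b := hasDerivAt_inv hb'.ne'
      have h2 : HasDerivAt (fun y : ℝ => (1 + y) * lam i) (lam i) b := by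
        simpa using ((hasDerivAt_id b).const_add 1).mul_const (lam i)
      have := (h1.const_add 1).fun_add h2
      rw [show lam i - (b ^ 2)⁻¹ = -(b ^ 2)⁻¹ + lam i by ring]
      exact this
    exact hfd.log (hf_pos b hb' i).ne'
  -- derivative of h at βp
  have hpow : HasDerivAt (fun b : ℝ => b ^ 2) (2 * βp) βp := by
    simpa using hasDerivAt_pow 2 βp
  have hβ2 : (βp ^ 2) ≠ 0 := pow_ne_zero 2 hβp.ne'
  have hhd : HasDerivAt h (∑ i,
      ((-(-(2 * βp) / (βp ^ 2) ^ 2)) * (1 + βp⁻¹ + (1 + βp) * lam i)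
        - (lam i - (βp ^ 2)⁻¹) * (lam i - (βp ^ 2)⁻¹))
        / (1 + βp⁻¹ + (1 + βp) * lam i) ^ 2) βp := by
    apply HasDerivAt.fun_sum
    intro i _
    have hN : HasDerivAt (fun b : ℝ => lam i - (b ^ 2)⁻¹) (-(-(2 * βp) / (βp ^ 2) ^ 2)) βp :=
      (hpow.inv hβ2).const_sub (lam i)
    have hD : HasDerivAt (fun b : ℝ => 1 + b⁻¹ + (1 + b) * lam i) (lam i - (βp ^ 2)⁻¹) βp := by
      have h1 : HasDerivAt (fun y : ℝ => y⁻¹) (-(βp ^ 2)⁻¹) βp := hasDerivAt_inv hβp.ne'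
      have h2 : HasDerivAt (fun y : ℝ => (1 + y) * lam i) (lam i) βp := by
        simpa using ((hasDerivAt_id βp).const_add 1).mul_const (lam i)
      have := (h1.const_add 1).fun_add h2
      rw [show lam i - (βp ^ 2)⁻¹ = -(βp ^ 2)⁻¹ + lam i by ring]
      exact this
    exact hN.div hD (hf_pos βp hβp i).ne'
  -- the sum equals T
  have hsum_eq : (∑ i,
      ((-(-(2 * βp) / (βp ^ 2) ^ 2)) * (1 + βp⁻¹ + (1 + βp) * lam i)
        - (lam i - (βp ^ 2)⁻¹) * (lam i - (βp ^ 2)⁻¹))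
        / (1 + βp⁻¹ + (1 + βp) * lam i) ^ 2) = T := by
    have key : ∀ i, ((-(-(2 * βp) / (βp ^ 2) ^ 2)) * (1 + βp⁻¹ + (1 + βp) * lam i)
        - (lam i - (βp ^ 2)⁻¹) * (lam i - (βp ^ 2)⁻¹))
        / (1 + βp⁻¹ + (1 + βp) * lam i) ^ 2
        = (1 / (βp * (1 + βp))) * ((βp ^ 2 * lam i ^ 2 + (1 + 2 * βp) * lam i) / (1 + βp * lam i) ^ 2)
          + ((1 + 2 * βp) / (βp ^ 2 * (1 + βp) ^ 2)) * ((1 - βp ^ 2 * lam i) / (1 + βp * lam i)) := by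
      intro i
      have hPne : (1 + βp * lam i) ≠ 0 := (hP_pos i).ne'
      rw [hf_eq i]
      field_simp
      ring
    rw [Finset.sum_congr rfl (fun i _ => key i), Finset.sum_add_distrib, ← Finset.mul_sum,
      ← Finset.mul_sum, hcrit, mul_zero, add_zero, hTdef, Finset.mul_sum]
  rw [hsum_eq] at hhd
  -- h βp = 0
  have hh0 : h βp = 0 := by
    have key : ∀ i, (lam i - (βp ^ 2)⁻¹) / (1 + βp⁻¹ + (1 + βp) * lam i)
        = (-(1 / (βp * (1 + βp)))) * ((1 - βp ^ 2 * lam i) / (1 + βp * lam i)) := by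
      intro i
      have hPne : (1 + βp * lam i) ≠ 0 := (hP_pos i).ne'
      rw [hf_eq i]
      field_simp
      ring
    rw [hhdef]
    simp only []
    rw [Finset.sum_congr rfl (fun i _ => key i), ← Finset.mul_sum, hcrit, mul_zero]
  -- T > 0
  have hTpos : 0 < T := by
    rw [hTdef]
    apply mul_pos (div_pos one_pos (mul_pos hβp hβ1))
    apply Finset.sum_pos
    · intro i _
      have h1 : 0 < βp ^ 2 * lam i ^ 2 + (1 + 2 * βp) * lam i := by
        have := hlam i; nlinarith
      exact div_pos h1 (pow_pos (hP_pos i) 2)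
    · haveI : Nonempty (Fin d) := ⟨⟨0, hd⟩⟩
      exact Finset.univ_nonempty
  -- F = g near βp
  have hIoi : Set.Ioi (0:ℝ) ∈ nhds βp := isOpen_Ioi.mem_nhds hβp
  have hFg : ∀ b : ℝ, 0 < b → F b = g b := by
    intro b hb
    rw [hF b hb, Real.log_mul hC.ne' ?_, Real.log_prod]
    · simp only [hgdef, one_div]
    · intro i _
      have := hf_pos b hb i
      rw [one_div]
      exact this.ne'
    · rw [Finset.prod_ne_zero_iff]
      intro i _
      have := hf_pos b hb i
      rw [one_div]
      exact this.ne'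
  have hFg_ev : F =ᶠ[nhds βp] g :=
    Filter.eventuallyEq_of_mem hIoi (fun b hb => hFg b hb)
  have hgh_ev : deriv g =ᶠ[nhds βp] h :=
    Filter.eventuallyEq_of_mem hIoi (fun b hb => (hgd b hb).deriv)
  have hFh_ev : deriv F =ᶠ[nhds βp] h := hFg_ev.deriv.trans hgh_ev
  have hd2 : deriv (deriv F) βp = T := by
    rw [hFh_ev.deriv_eq, hhd.deriv]
  refine ⟨hd2, hTpos, ?_⟩
  -- local strict minimum
  have hslope : Filter.Tendsto (slope h βp) (nhdsWithin βp {βp}ᶜ) (nhds T) :=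
    hasDerivAt_iff_tendsto_slope.mp hhd
  have hev : ∀ᶠ b in nhdsWithin βp {βp}ᶜ, 0 < slope h βp b :=
    hslope.eventually (eventually_gt_nhds hTpos)
  rw [Filter.Eventually, Metric.mem_nhdsWithin_iff] at hev
  obtain ⟨ε₁, hε₁, hball⟩ := hev
  refine ⟨min ε₁ βp, lt_min hε₁ hβp, ?_⟩
  intro b hbne hbd
  have hbd1 : |b - βp| < ε₁ := lt_of_lt_of_le hbd (min_le_left _ _)
  have hbd2 : |b - βp| < βp := lt_of_lt_of_le hbd (min_le_right _ _)
  have hbpos : 0 < b := by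
    rcases abs_lt.mp hbd2 with ⟨h1, h2⟩; linarith
  have hsign : ∀ c : ℝ, c ≠ βp → |c - βp| < ε₁ → 0 < h c / (c - βp) := by
    intro c hc hcd
    have hmem : c ∈ Metric.ball βp ε₁ ∩ {βp}ᶜ :=
      ⟨by rwa [Metric.mem_ball, Real.dist_eq], hc⟩
    have := hball hmem
    rwa [Set.mem_setOf_eq, slope_def_field, hh0, sub_zero] at this
    -- slope h βp c = (h c - h βp)/(c - βp)
  have hgc : ∀ x : ℝ, 0 < x → ContinuousAt g x := fun x hx => (hgd x hx).continuousAt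
  rw [hFg βp hβp, hFg b hbpos]
  rcases lt_or_gt_of_ne hbne with hlt | hgt
  · -- b < βp
    have hcont : ContinuousOn g (Set.Icc b βp) := fun x hx =>
      ((hgc x (lt_of_lt_of_le hbpos hx.1)).continuousWithinAt)
    have hderiv : ∀ x ∈ Set.Ioo b βp, HasDerivAt g (h x) x := fun x hx =>
      hgd x (lt_trans hbpos hx.1)
    obtain ⟨c, hc, hceq⟩ := exists_hasDerivAt_eq_slope g h hlt hcont hderiv
    have hcne : c ≠ βp := hc.2.ne
    have hcd : |c - βp| < ε₁ := by
      have h1 : |c - βp| = βp - c := by rw [abs_sub_comm, abs_of_pos (by linarith [hc.2])]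
      have h2 : |b - βp| = βp - b := by rw [abs_sub_comm, abs_of_pos (by linarith)]
      rw [h1]; rw [h2] at hbd1
      linarith [hc.1]
    have hpos := hsign c hcne hcd
    have hcneg : h c < 0 := by
      rcases div_pos_iff.mp hpos with ⟨h1, h2⟩ | ⟨h1, h2⟩
      · exfalso; linarith [hc.2]
      · exact h1
    rw [hceq] at hcneg
    have hden : 0 < βp - b := by linarith
    have := (div_neg_iff.mp hcneg)
    rcases this with ⟨h1, h2⟩ | ⟨h1, h2⟩
    · exfalso; linarith
    · linarith
  · -- βp < b
    have hcont : ContinuousOn g (Set.Icc βp b) := fun x hx =>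
      ((hgc x (lt_of_lt_of_le hβp hx.1)).continuousWithinAt)
    have hderiv : ∀ x ∈ Set.Ioo βp b, HasDerivAt g (h x) x := fun x hx =>
      hgd x (lt_trans hβp hx.1)
    obtain ⟨c, hc, hceq⟩ := exists_hasDerivAt_eq_slope g h hgt hcont hderiv
    have hcne : c ≠ βp := hc.1.ne'
    have hcd : |c - βp| < ε₁ := by
      have h1 : |c - βp| = c - βp := abs_of_pos (by linarith [hc.1])
      have h2 : |b - βp| = b - βp := abs_of_pos (by linarith)
      rw [h1]; rw [h2] at hbd1
      linarith [hc.2]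
    have hpos := hsign c hcne hcd
    have hcpos : 0 < h c := by
      rcases div_pos_iff.mp hpos with ⟨h1, h2⟩ | ⟨h1, h2⟩
      · exact h1
      · exfalso; linarith [hc.1]
    rw [hceq] at hcpos
    have hden : 0 < b - βp := by linarith
    rcases div_pos_iff.mp hcpos with ⟨h1, h2⟩ | ⟨h1, h2⟩
    · linarith
    · exfalso; linarith

/-- With `Q(β) := (1 + 1/β) Q₁ + (1 + β) Q₂` for symmetric positive definite
`Q₁, Q₂`, and `λ₁, …, λ_d` the eigenvalues of `Q₂^{1/2} Q₁⁻¹ Q₂^{1/2}`: if `β₊ > 0` satisfies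
the first-order condition `∑ i, (1 - β₊²λᵢ)/(1 + β₊λᵢ) = 0`, then the second derivative of
`β ↦ log det Q(β)` at `β₊` equals
`(1/(β₊(1+β₊))) ∑ i, (β₊²λᵢ² + (1+2β₊)λᵢ)/(1+β₊λᵢ)²`, which is strictly positive; hence `β₊`
is a strict local minimum of `β ↦ log det Q(β)`. -/
theorem second_deriv_logdet_Q_pos_at_critical
    (d : ℕ) (hd : 1 ≤ d) (Q₁ Q₂ : Matrix (Fin d) (Fin d) ℝ)
    (hQ₁ : Q₁.PosDef) (hQ₂ : Q₂.PosDef)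
    (hM : (CFC.sqrt Q₂ * Q₁⁻¹ * CFC.sqrt Q₂).IsHermitian)
    (lam : Fin d → ℝ) (hlam : lam = hM.eigenvalues)
    (βp : ℝ) (hβp : 0 < βp)
    (hcrit : ∑ i, (1 - βp ^ 2 * lam i) / (1 + βp * lam i) = 0) :
    deriv (deriv (fun b : ℝ => Real.log ((1 + 1 / b) • Q₁ + (1 + b) • Q₂).det)) βp
      = (1 / (βp * (1 + βp)))
        * ∑ i, (βp ^ 2 * lam i ^ 2 + (1 + 2 * βp) * lam i) / (1 + βp * lam i) ^ 2 ∧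
    0 < (1 / (βp * (1 + βp)))
        * ∑ i, (βp ^ 2 * lam i ^ 2 + (1 + 2 * βp) * lam i) / (1 + βp * lam i) ^ 2 ∧
    ∃ ε > 0, ∀ b : ℝ, b ≠ βp → |b - βp| < ε →
      Real.log ((1 + 1 / βp) • Q₁ + (1 + βp) • Q₂).det
        < Real.log ((1 + 1 / b) • Q₁ + (1 + b) • Q₂).det := by
  subst hlam
  have hMpd : (CFC.sqrt Q₂ * Q₁⁻¹ * CFC.sqrt Q₂).PosDef :=
    aux_posdef_M d Q₁ Q₂ hQ₁ hQ₂
  have hlam_pos : ∀ i, 0 < hM.eigenvalues i := fun i => hMpd.eigenvalues_pos i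
  have hF : ∀ b : ℝ, 0 < b →
      (fun b : ℝ => Real.log ((1 + 1 / b) • Q₁ + (1 + b) • Q₂).det) b
        = Real.log (Q₁.det * ∏ i, (1 + 1 / b + (1 + b) * hM.eigenvalues i)) := by
    intro b _
    simp only []
    rw [aux_det d Q₁ Q₂ hQ₁ hQ₂ hM (1 + 1 / b) (1 + b)]
  exact aux_analysis d hd hM.eigenvalues hlam_pos βp hβp hcrit Q₁.det hQ₁.det_pos
    (fun b : ℝ => Real.log ((1 + 1 / b) • Q₁ + (1 + b) • Q₂).det) hF
end

section
/- Let d ≥ 1 and λ₁,…,λ_d > 0, and define the polynomial p_{d+1}(β) := Σ_{i=1}^{d} (β²λᵢ − 1) · Π_{j≠i} (βλⱼ + 1). Then p_{d+1} has exactly one positive real root: there exists a unique β₊ > 0 with p_{d+1}(β₊) = 0. -/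
open Finset

/-- For `d ≥ 1` and `λ₁, …, λ_d > 0`, the polynomial
`p_{d+1}(β) := ∑ i, (β²λᵢ - 1) ∏_{j ≠ i} (βλⱼ + 1)` has exactly one positive real root. -/
theorem unique_positive_root
    (d : ℕ) (hd : 1 ≤ d) (lam : Fin d → ℝ) (hlam : ∀ i, 0 < lam i) :
    ∃! β : ℝ, 0 < β ∧
      (∑ i, (β ^ 2 * lam i - 1) * ∏ j ∈ univ.erase i, (β * lam j + 1)) = 0 := by
  have hne : (univ : Finset (Fin d)).Nonempty := ⟨⟨0, hd⟩, mem_univ _⟩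
  set f : ℝ → ℝ := fun β => ∑ i, (β ^ 2 * lam i - 1) / (β * lam i + 1) with hf
  have hden : ∀ (β : ℝ), 0 ≤ β → ∀ i, 0 < β * lam i + 1 := by
    intro β hβ i; nlinarith [hlam i, mul_nonneg hβ (hlam i).le]
  have hprodpos : ∀ (β : ℝ), 0 ≤ β → 0 < ∏ j, (β * lam j + 1) :=
    fun β hβ => Finset.prod_pos fun j _ => hden β hβ j
  have hkey : ∀ (β : ℝ), 0 ≤ β →
      (∑ i, (β ^ 2 * lam i - 1) * ∏ j ∈ univ.erase i, (β * lam j + 1))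
        = (∏ j, (β * lam j + 1)) * f β := by
    intro β hβ
    rw [hf, Finset.mul_sum]
    refine Finset.sum_congr rfl fun i _ => ?_
    rw [← Finset.mul_prod_erase univ _ (mem_univ i)]
    have : β * lam i + 1 ≠ 0 := (hden β hβ i).ne'
    field_simp
  have hmono : StrictMonoOn f (Set.Ici 0) := by
    intro a ha b hb hab
    apply Finset.sum_lt_sum_of_nonempty hne
    intro i _
    rw [div_lt_div_iff₀ (hden a ha i) (hden b hb i)]
    have ha' : (0:ℝ) ≤ a := ha
    have hb' : (0:ℝ) ≤ b := hb
    have key : (b^2*lam i - 1)*(a*lam i + 1) - (a^2*lam i - 1)*(b*lam i + 1)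
        = lam i*(b-a)*(a*b*lam i + a + b + 1) := by ring
    have h1 : 0 < lam i*(b-a)*(a*b*lam i + a + b + 1) := by
      apply mul_pos (mul_pos (hlam i) (sub_pos.mpr hab))
      have : 0 ≤ a*b*lam i := mul_nonneg (mul_nonneg ha' hb') (hlam i).le
      linarith
    linarith [key, h1]
  have hcont : ContinuousOn f (Set.Ici 0) := by
    apply continuousOn_finset_sum
    intro i _
    exact ContinuousOn.div (by fun_prop) (by fun_prop)
      (fun β hβ => (hden β hβ i).ne')
  have hf0 : f 0 < 0 := by
    have : f 0 = ∑ _i : Fin d, (-1 : ℝ) := by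
      refine Finset.sum_congr rfl fun i _ => ?_
      norm_num
    rw [this, Finset.sum_const]
    simp only [card_univ, Fintype.card_fin, nsmul_eq_mul]
    have : (0:ℝ) < d := by exact_mod_cast hd
    nlinarith
  -- choose B with f B > 0
  set m : ℝ := univ.inf' hne lam with hm
  have hmpos : 0 < m := by
    rw [hm]
    apply (Finset.lt_inf'_iff hne).mpr
    intro i _; exact hlam i
  set B : ℝ := 1 / m + 1 with hB
  have hB1 : 1 < B := by
    have : 0 < 1 / m := by positivity
    rw [hB]; linarith
  have hBm : 1 < B * m := by
    have : B * m = 1 + m := by rw [hB]; field_simp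
    linarith
  have hB0 : (0:ℝ) < B := by linarith
  have hfB : 0 < f B := by
    apply Finset.sum_pos _ hne
    intro i _
    apply div_pos _ (hden B hB0.le i)
    have hmi : m ≤ lam i := Finset.inf'_le _ (mem_univ i)
    have h1 : 1 < B * lam i := lt_of_lt_of_le hBm (by nlinarith)
    nlinarith
  -- IVT
  have hsub : Set.Icc (0:ℝ) B ⊆ Set.Ici 0 := fun x hx => hx.1
  have := intermediate_value_Ioo hB0.le (hcont.mono hsub)
  have h0mem : (0:ℝ) ∈ Set.Ioo (f 0) (f B) := ⟨hf0, hfB⟩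
  obtain ⟨β, hβmem, hβeq⟩ := this h0mem
  refine ⟨β, ⟨hβmem.1, ?_⟩, ?_⟩
  · rw [hkey β hβmem.1.le, hβeq, mul_zero]
  · rintro γ ⟨hγpos, hγeq⟩
    rw [hkey γ hγpos.le] at hγeq
    have hfγ : f γ = 0 :=
      (mul_eq_zero.mp hγeq).resolve_left (hprodpos γ hγpos.le).ne'
    exact hmono.injOn (Set.mem_Ici.mpr hγpos.le) (Set.mem_Ici.mpr hβmem.1.le)
      (by rw [hfγ, hβeq])
end

section
/- Let Q₁, Q₂ be real symmetric positive definite d×d matrices (d ≥ 1), and for β > 0 define Q(β) := (1 + 1/β)Q₁ + (1 + β)Q₂. Then the function β ↦ log det Q(β) on (0,∞) attains a strict global minimum at a unique point β₊ > 0, and β₊ is the unique positive solution of Σ_{i=1}^{d} (1 − β²λᵢ)/(1 + βλᵢ) = 0, where λ₁,…,λ_d > 0 are the eigenvalues of Q₂^{1/2} Q₁⁻¹ Q₂^{1/2}. -/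
open Matrix
open scoped MatrixOrder

section Aux

lemma aux_det_conj {d : ℕ} (M : Matrix (Fin d) (Fin d) ℝ) (hM : M.IsHermitian) (a b : ℝ) :
    (a • (1 : Matrix (Fin d) (Fin d) ℝ) + b • M).det = ∏ i, (a + b * hM.eigenvalues i) := by
  set U : Matrix (Fin d) (Fin d) ℝ := (hM.eigenvectorUnitary : Matrix (Fin d) (Fin d) ℝ) with hU
  have hUU : U * star U = 1 := (Matrix.mem_unitaryGroup_iff).mp hM.eigenvectorUnitary.2
  have key : a • (1 : Matrix (Fin d) (Fin d) ℝ) + b • M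
      = U * diagonal (fun i => a + b * hM.eigenvalues i) * star U := by
    have hD : diagonal (fun i => a + b * hM.eigenvalues i)
        = a • (1 : Matrix (Fin d) (Fin d) ℝ) + b • diagonal hM.eigenvalues := by
      ext i j
      by_cases h : i = j <;> simp [diagonal_apply, Matrix.one_apply, h]
    rw [hD, mul_add, add_mul]
    rw [Matrix.mul_smul, Matrix.smul_mul, Matrix.mul_smul, Matrix.smul_mul, mul_one, hUU]
    congr 1
    conv_lhs => rw [hM.spectral_theorem]
    simp [RCLike.ofReal_real_eq_id, hU]
  rw [key, Matrix.det_mul_right_comm, hUU, one_mul, det_diagonal]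

lemma aux_det_factor {d : ℕ} (Q₁ Q₂ : Matrix (Fin d) (Fin d) ℝ)
    (hQ₁ : Q₁.PosDef) (hQ₂ : Q₂.PosDef)
    (hM : (CFC.sqrt Q₂ * Q₁⁻¹ * CFC.sqrt Q₂).IsHermitian) (a b : ℝ) :
    (a • Q₁ + b • Q₂).det
      = Q₂.det * (CFC.sqrt Q₂ * Q₁⁻¹ * CFC.sqrt Q₂).det⁻¹
        * ∏ i, (a + b * hM.eigenvalues i) := by
  set S : Matrix (Fin d) (Fin d) ℝ := CFC.sqrt Q₂ with hS
  set M : Matrix (Fin d) (Fin d) ℝ := S * Q₁⁻¹ * S with hMdef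
  have hSH : S.IsHermitian := (CFC.sqrt_nonneg Q₂).posSemidef.1
  have hSS : S * S = Q₂ := CFC.sqrt_mul_sqrt_self Q₂ hQ₂.posSemidef.nonneg
  have hdetSS : S.det * S.det = Q₂.det := by rw [← det_mul, hSS]
  have hdetS : S.det ≠ 0 := by
    intro h; rw [h, mul_zero] at hdetSS; exact hQ₂.det_pos.ne (hdetSS)
  have hSunit : IsUnit S.det := hdetS.isUnit
  have hMpd : M.PosDef := by
    refine Matrix.PosDef.of_dotProduct_mulVec_pos hM (fun x hx => ?_)
    have hinj : Function.Injective S.mulVec :=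
      Matrix.mulVec_injective_iff_isUnit.mpr ((Matrix.isUnit_iff_isUnit_det S).mpr hSunit)
    have hSx : S *ᵥ x ≠ 0 := fun h0 => hx (hinj (by simpa using h0))
    have := hQ₁.inv.dotProduct_mulVec_pos hSx
    have hrw : M = Sᴴ * Q₁⁻¹ * S := by rw [hSH.eq]
    rw [hrw]
    simpa only [star_mulVec, dotProduct_mulVec, vecMul_vecMul] using this
  have hdetM : M.det ≠ 0 := hMpd.det_pos.ne'
  have hMinv : M⁻¹ = S⁻¹ * Q₁ * S⁻¹ := by
    rw [hMdef, Matrix.mul_inv_rev, Matrix.mul_inv_rev,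
      Q₁.nonsing_inv_nonsing_inv hQ₁.det_pos.ne'.isUnit]
    noncomm_ring
  have hfact : a • Q₁ + b • Q₂ = S * (a • M⁻¹ + b • (1 : Matrix (Fin d) (Fin d) ℝ)) * S := by
    rw [mul_add, add_mul, Matrix.mul_smul, Matrix.smul_mul, Matrix.mul_smul, Matrix.smul_mul,
      mul_one, hSS, hMinv]
    congr 2
    symm
    calc S * (S⁻¹ * Q₁ * S⁻¹) * S = (S * S⁻¹) * Q₁ * (S⁻¹ * S) := by noncomm_ring
    _ = Q₁ := by
      rw [Matrix.mul_nonsing_inv _ hSunit, Matrix.nonsing_inv_mul _ hSunit, one_mul, mul_one]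
  have hfact2 : a • M⁻¹ + b • (1 : Matrix (Fin d) (Fin d) ℝ)
      = M⁻¹ * (a • (1 : Matrix (Fin d) (Fin d) ℝ) + b • M) := by
    rw [mul_add, Matrix.mul_smul, Matrix.mul_smul, mul_one, Matrix.nonsing_inv_mul _ hdetM.isUnit]
  rw [hfact, hfact2, det_mul, det_mul, det_mul, aux_det_conj M hM a b,
    Matrix.det_nonsing_inv]
  rw [Ring.inverse_eq_inv']
  ring_nf
  rw [← hdetSS]
  ring

lemma aux_M_posdef {d : ℕ} (Q₁ Q₂ : Matrix (Fin d) (Fin d) ℝ)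
    (hQ₁ : Q₁.PosDef) (hQ₂ : Q₂.PosDef)
    (hM : (CFC.sqrt Q₂ * Q₁⁻¹ * CFC.sqrt Q₂).IsHermitian) :
    (CFC.sqrt Q₂ * Q₁⁻¹ * CFC.sqrt Q₂).PosDef := by
  set S : Matrix (Fin d) (Fin d) ℝ := CFC.sqrt Q₂ with hS
  have hSH : S.IsHermitian := (CFC.sqrt_nonneg Q₂).posSemidef.1
  have hSS : S * S = Q₂ := CFC.sqrt_mul_sqrt_self Q₂ hQ₂.posSemidef.nonneg
  have hdetSS : S.det * S.det = Q₂.det := by rw [← det_mul, hSS]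
  have hdetS : S.det ≠ 0 := by
    intro h; rw [h, mul_zero] at hdetSS; exact hQ₂.det_pos.ne (hdetSS)
  refine Matrix.PosDef.of_dotProduct_mulVec_pos hM (fun x hx => ?_)
  have hinj : Function.Injective S.mulVec :=
    Matrix.mulVec_injective_iff_isUnit.mpr ((Matrix.isUnit_iff_isUnit_det S).mpr hdetS.isUnit)
  have hSx : S *ᵥ x ≠ 0 := fun h0 => hx (hinj (by simpa using h0))
  have := hQ₁.inv.dotProduct_mulVec_pos hSx
  have hrw : S * Q₁⁻¹ * S = Sᴴ * Q₁⁻¹ * S := by rw [hSH.eq]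
  rw [hrw]
  simpa only [star_mulVec, dotProduct_mulVec, vecMul_vecMul] using this

end Aux

section Calc

variable {d : ℕ}

/-- strict antitonicity of `g` -/
lemma aux_g_strictAnti (lam : Fin d → ℝ) (hpos : ∀ i, 0 < lam i) (hd : 1 ≤ d) :
    StrictAntiOn (fun β : ℝ => ∑ i, (1 - β ^ 2 * lam i) / (1 + β * lam i)) (Set.Ici 0) := by
  have : Nonempty (Fin d) := ⟨⟨0, hd⟩⟩
  intro a ha b hb hab
  apply Finset.sum_lt_sum_of_nonempty Finset.univ_nonempty
  intro i _
  have hli := hpos i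
  have ha0 : (0:ℝ) ≤ a := ha
  have hb0 : (0:ℝ) ≤ b := hb
  have h1 : 0 < 1 + a * lam i := by nlinarith
  have h2 : 0 < 1 + b * lam i := by nlinarith
  rw [div_lt_div_iff₀ h2 h1]
  nlinarith [mul_pos (sub_pos.mpr hab) hli,
    mul_nonneg (mul_pos (sub_pos.mpr hab) hli).le (add_nonneg ha0 hb0),
    mul_nonneg (mul_pos (sub_pos.mpr hab) hli).le (mul_nonneg (mul_nonneg ha0 hb0) hli.le)]

lemma aux_g_cont (lam : Fin d → ℝ) (hpos : ∀ i, 0 < lam i) :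
    ContinuousOn (fun β : ℝ => ∑ i, (1 - β ^ 2 * lam i) / (1 + β * lam i)) (Set.Ici 0) := by
  apply continuousOn_finset_sum
  intro i _
  apply ContinuousOn.div
  · fun_prop
  · fun_prop
  · intro x hx
    have : (0:ℝ) ≤ x := hx
    have := hpos i
    nlinarith

end Calc

/-- For real symmetric positive definite `d × d` matrices `Q₁, Q₂` (`d ≥ 1`)
and `Q(β) := (1 + 1/β) Q₁ + (1 + β) Q₂`, the function `β ↦ log det Q(β)` on `(0, ∞)` attains a
strict global minimum at a unique point `β₊ > 0`, and `β₊` is the unique positive solution of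
`∑ i, (1 - β²λᵢ)/(1 + βλᵢ) = 0`, where `λ₁, …, λ_d > 0` are the eigenvalues of
`Q₂^{1/2} Q₁⁻¹ Q₂^{1/2}`. -/
theorem logdet_Q_unique_global_min
    (d : ℕ) (hd : 1 ≤ d) (Q₁ Q₂ : Matrix (Fin d) (Fin d) ℝ)
    (hQ₁ : Q₁.PosDef) (hQ₂ : Q₂.PosDef)
    (hM : (CFC.sqrt Q₂ * Q₁⁻¹ * CFC.sqrt Q₂).IsHermitian)
    (lam : Fin d → ℝ) (hlam : lam = hM.eigenvalues) :
    ∃! βp : ℝ, 0 < βp ∧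
      (∀ β : ℝ, 0 < β → β ≠ βp →
        Real.log ((1 + 1 / βp) • Q₁ + (1 + βp) • Q₂).det
          < Real.log ((1 + 1 / β) • Q₁ + (1 + β) • Q₂).det) ∧
      (∑ i, (1 - βp ^ 2 * lam i) / (1 + βp * lam i)) = 0 ∧
      (∀ β : ℝ, 0 < β → (∑ i, (1 - β ^ 2 * lam i) / (1 + β * lam i)) = 0 → β = βp) := by
  have hne : Nonempty (Fin d) := ⟨⟨0, hd⟩⟩
  have hpos : ∀ i, 0 < lam i := by
    subst hlam
    exact fun i => (aux_M_posdef Q₁ Q₂ hQ₁ hQ₂ hM).eigenvalues_pos i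
  set g : ℝ → ℝ := fun β => ∑ i, (1 - β ^ 2 * lam i) / (1 + β * lam i) with hgdef
  have hanti : StrictAntiOn g (Set.Ici 0) := aux_g_strictAnti lam hpos hd
  have hcont : ContinuousOn g (Set.Ici 0) := aux_g_cont lam hpos
  have hg0 : g 0 = (d : ℝ) := by simp [hgdef]
  have hdpos : (0:ℝ) < (d:ℝ) := by
    have : 0 < d := hd
    exact_mod_cast this
  -- a point where g is negative
  obtain ⟨β₀, hβ₀def⟩ : ∃ b : ℝ, b = 1 + ∑ i, (lam i)⁻¹ := ⟨_, rfl⟩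
  have hβ₀ge : (1:ℝ) ≤ β₀ := by
    have : (0:ℝ) ≤ ∑ i, (lam i)⁻¹ :=
      Finset.sum_nonneg fun i _ => (inv_pos.mpr (hpos i)).le
    rw [hβ₀def]; linarith
  have hβ₀pos : (0:ℝ) < β₀ := by linarith
  have hgβ₀ : g β₀ < 0 := by
    apply Finset.sum_neg ?_ Finset.univ_nonempty
    intro i _
    have hli := hpos i
    have hone : (lam i)⁻¹ ≤ ∑ j, (lam j)⁻¹ :=
      Finset.single_le_sum (fun j _ => (inv_pos.mpr (hpos j)).le) (Finset.mem_univ i)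
    have hge : 1 + (lam i)⁻¹ ≤ β₀ := by rw [hβ₀def]; linarith
    have hinv : (lam i)⁻¹ * lam i = 1 := inv_mul_cancel₀ hli.ne'
    have hupos : (0:ℝ) < 1 + (lam i)⁻¹ := by positivity
    have hsq : (1 + (lam i)⁻¹) ^ 2 ≤ β₀ ^ 2 := by nlinarith
    have hexp : (1 + (lam i)⁻¹) ^ 2 * lam i = lam i + 2 + (lam i)⁻¹ := by
      field_simp; ring
    have h5 : (1 + (lam i)⁻¹) ^ 2 * lam i ≤ β₀ ^ 2 * lam i :=
      mul_le_mul_of_nonneg_right hsq hli.le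
    have hnum : 1 - β₀ ^ 2 * lam i < 0 := by
      have hu : 0 < (lam i)⁻¹ := inv_pos.mpr hli
      linarith [hexp, h5, hli, hu]
    have hden : 0 < 1 + β₀ * lam i := by nlinarith
    exact div_neg_of_neg_of_pos hnum hden
  -- the root
  have h0β₀ : (0:ℝ) ≤ β₀ := hβ₀pos.le
  have hIcc : Set.Icc 0 β₀ ⊆ Set.Ici (0:ℝ) := fun x hx => hx.1
  obtain ⟨c, hcmem, hgc⟩ :=
    (intermediate_value_Icc' h0β₀ (hcont.mono hIcc)) ⟨hgβ₀.le, by rw [hg0]; exact hdpos.le⟩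
  have hcpos : 0 < c := by
    rcases hcmem.1.lt_or_eq with h | h
    · exact h
    · exfalso; rw [← h] at hgc; rw [hg0] at hgc; linarith
  have hroot_unique : ∀ y : ℝ, 0 < y → g y = 0 → y = c := by
    intro y hy hgy
    exact hanti.injOn (Set.mem_Ici.mpr hy.le) (Set.mem_Ici.mpr hcpos.le) (hgy.trans hgc.symm)
  -- the log-det formula
  set F : ℝ → ℝ :=
    fun β => (d:ℝ) * Real.log (1+β) - (d:ℝ) * Real.log β + ∑ i, Real.log (1+β*lam i) with hFdef
  have key : ∀ β : ℝ, 0 < β →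
      Real.log ((1 + 1 / β) • Q₁ + (1 + β) • Q₂).det
        = Real.log (Q₂.det * (CFC.sqrt Q₂ * Q₁⁻¹ * CFC.sqrt Q₂).det⁻¹)
          + F β := by
    intro β hβ
    have hMdetpos : 0 < (CFC.sqrt Q₂ * Q₁⁻¹ * CFC.sqrt Q₂).det :=
      (aux_M_posdef Q₁ Q₂ hQ₁ hQ₂ hM).det_pos
    have hCpos : 0 < Q₂.det * (CFC.sqrt Q₂ * Q₁⁻¹ * CFC.sqrt Q₂).det⁻¹ :=
      mul_pos hQ₂.det_pos (inv_pos.mpr hMdetpos)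
    have hev : hM.eigenvalues = lam := hlam.symm
    have htermpos : ∀ i : Fin d, 0 < (1 + 1/β) + (1 + β) * lam i := by
      intro i; have := hpos i; have h1 : 0 < 1/β := by positivity
      nlinarith
    have hprodpos : 0 < ∏ i, ((1 + 1/β) + (1 + β) * lam i) :=
      Finset.prod_pos fun i _ => htermpos i
    rw [aux_det_factor Q₁ Q₂ hQ₁ hQ₂ hM (1 + 1/β) (1 + β), hev]
    rw [Real.log_mul hCpos.ne' hprodpos.ne']
    congr 1
    rw [Real.log_prod fun i _ => (htermpos i).ne']
    have hterm : ∀ i : Fin d, Real.log ((1 + 1/β) + (1 + β) * lam i)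
        = Real.log (1+β) + Real.log (1+β*lam i) - Real.log β := by
      intro i
      have hli := hpos i
      have h1 : (0:ℝ) < 1 + β := by linarith
      have h2 : (0:ℝ) < 1 + β * lam i := by nlinarith
      have hrw : (1 + 1/β) + (1 + β) * lam i = ((1+β) * (1+β*lam i)) / β := by
        field_simp; ring
      rw [hrw, Real.log_div (mul_pos h1 h2).ne' hβ.ne', Real.log_mul h1.ne' h2.ne']
    rw [Finset.sum_congr rfl fun i _ => hterm i]
    rw [Finset.sum_sub_distrib, Finset.sum_add_distrib]
    simp [hFdef, Finset.card_univ, nsmul_eq_mul]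
    ring
  -- derivative of F
  have hF : ∀ x : ℝ, 0 < x → HasDerivAt F (-(g x)/(x*(1+x))) x := by
    intro x hx
    have h1x : (0:ℝ) < 1 + x := by linarith
    have h1 : HasDerivAt (fun β : ℝ => Real.log (1+β)) (1/(1+x)) x := by
      have := ((hasDerivAt_id x).const_add (1:ℝ)).log h1x.ne'
      simpa using this
    have h2 : HasDerivAt Real.log x⁻¹ x := Real.hasDerivAt_log hx.ne'
    have h3 : ∀ i : Fin d, HasDerivAt (fun β : ℝ => Real.log (1+β*lam i))
        (lam i/(1+x*lam i)) x := by
      intro i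
      have hd0 : (0:ℝ) < 1 + x*lam i := by nlinarith [hpos i]
      have := (((hasDerivAt_id x).mul_const (lam i)).const_add (1:ℝ)).log hd0.ne'
      simpa using this
    have hsum : HasDerivAt (fun β : ℝ => ∑ i, Real.log (1+β*lam i))
        (∑ i, lam i/(1+x*lam i)) x := HasDerivAt.fun_sum (fun i _ => h3 i)
    have hD := ((h1.const_mul (d:ℝ)).sub (h2.const_mul (d:ℝ))).add hsum
    refine hD.congr_deriv ?_
    symm
    have hsplit : (d:ℝ) * (1/(1+x)) - (d:ℝ) * x⁻¹ + ∑ i, lam i/(1+x*lam i)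
        = ∑ i : Fin d, (1/(1+x) - x⁻¹ + lam i/(1+x*lam i)) := by
      rw [Finset.sum_add_distrib, Finset.sum_sub_distrib]
      simp [Finset.card_univ, nsmul_eq_mul]
    rw [hsplit, hgdef]
    rw [← Finset.sum_neg_distrib, Finset.sum_div]
    apply Finset.sum_congr rfl
    intro i _
    have hli := hpos i
    have hd0 : (0:ℝ) < 1 + x * lam i := by nlinarith
    field_simp
    ring
  -- strict monotonicity on both sides of c
  have hFanti : StrictAntiOn F (Set.Ioc 0 c) := by
    apply strictAntiOn_of_deriv_neg (convex_Ioc 0 c)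
    · exact fun x hx => ((hF x hx.1).differentiableAt.continuousAt).continuousWithinAt
    · intro x hx
      rw [interior_Ioc] at hx
      rw [(hF x hx.1).deriv]
      have hgx : 0 < g x := by
        have := hanti (Set.mem_Ici.mpr hx.1.le) (Set.mem_Ici.mpr hcpos.le) hx.2
        rw [hgc] at this; linarith
      apply div_neg_of_neg_of_pos (by linarith)
      have h1 : 0 < 1 + x := by linarith [hx.1]
      exact mul_pos hx.1 h1
  have hFmono : StrictMonoOn F (Set.Ici c) := by
    apply strictMonoOn_of_deriv_pos (convex_Ici c)
    · exact fun x hx =>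
        ((hF x (hcpos.trans_le hx)).differentiableAt.continuousAt).continuousWithinAt
    · intro x hx
      rw [interior_Ici] at hx
      have hxpos : 0 < x := hcpos.trans hx
      rw [(hF x hxpos).deriv]
      have hgx : g x < 0 := by
        have := hanti (Set.mem_Ici.mpr hcpos.le) (Set.mem_Ici.mpr hxpos.le) hx
        rw [hgc] at this; linarith
      apply div_pos (by linarith)
      have h1 : 0 < 1 + x := by linarith
      exact mul_pos hxpos h1
  have hmin : ∀ β : ℝ, 0 < β → β ≠ c → F c < F β := by
    intro β hβ hβne
    rcases lt_or_gt_of_ne hβne with h | h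
    · exact hFanti ⟨hβ, h.le⟩ ⟨hcpos, le_refl c⟩ h
    · exact hFmono (Set.mem_Ici.mpr le_rfl) (Set.mem_Ici.mpr h.le) h
  refine ⟨c, ⟨hcpos, ?_, hgc, ?_⟩, ?_⟩
  · intro β hβ hβne
    rw [key c hcpos, key β hβ]
    exact add_lt_add_right (hmin β hβ hβne) _
  · intro β hβ h0
    exact hroot_unique β hβ h0
  · rintro y ⟨hy, -, hgy, -⟩
    exact hroot_unique y hy hgy
end

section
/- Let λ₁, λ₂ > 0 and define the cubic p₃(β) := 2λ₁λ₂β³ + (λ₁+λ₂)β² − (λ₁+λ₂)β − 2. Then p₃ has a unique positive root β₊, and β₊ satisfies the bounds (√((λ₁+λ₂)(λ₁+λ₂+6λ₁λ₂)) − (λ₁+λ₂))/(6λ₁λ₂) < β₊ < min{ (λ₁+√(λ₁(λ₁+8)))/(2λ₁), (λ₂+√(λ₂(λ₂+8)))/(2λ₂) }. -/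
private lemma cubic_key_identity (a b x y : ℝ) :
    x^2*(2*a*b*y^3+(a+b)*y^2-(a+b)*y-2) - y^2*(2*a*b*x^3+(a+b)*x^2-(a+b)*x-2)
    = (y-x)*(2*a*b*x^2*y^2 + (a+b)*x*y + 2*(x+y)) := by ring

/-- if p(x) ≤ 0 < p(y) for positive x,y then x < y -/
private lemma cubic_order (a b x y : ℝ) (ha : 0 < a) (hb : 0 < b)
    (hx : 0 < x) (hy : 0 < y)
    (hfx : 2*a*b*x^3+(a+b)*x^2-(a+b)*x-2 ≤ 0)
    (hfy : 0 < 2*a*b*y^3+(a+b)*y^2-(a+b)*y-2) : x < y := by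
  by_contra h
  push_neg at h
  have hkey := cubic_key_identity a b x y
  nlinarith [mul_pos (pow_pos hx 2) hfy,
    mul_nonneg (le_of_lt (pow_pos hy 2)) (neg_nonneg.mpr hfx),
    mul_pos (mul_pos (mul_pos ha hb) (mul_pos (mul_pos hx hx) hy)) hy,
    mul_pos (mul_pos hx hy) (add_pos ha hb)]

private lemma cubic_no_two_roots (a b x y : ℝ) (ha : 0 < a) (hb : 0 < b)
    (hx : 0 < x) (hy : 0 < y) (hxy : x < y)
    (hfx : 2*a*b*x^3+(a+b)*x^2-(a+b)*x-2 = 0)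
    (hfy : 2*a*b*y^3+(a+b)*y^2-(a+b)*y-2 = 0) : False := by
  have hkey := cubic_key_identity a b x y
  nlinarith [mul_pos (mul_pos (mul_pos ha hb) (mul_pos (mul_pos hx hx) hy)) hy,
    mul_pos (mul_pos hx hy) (add_pos ha hb), sub_pos.mpr hxy]

private lemma cubic_aux_upper (a b : ℝ) (ha : 0 < a) (hb : 0 < b) :
    0 < (a + Real.sqrt (a*(a+8)))/(2*a) ∧
    0 < 2*a*b*((a + Real.sqrt (a*(a+8)))/(2*a))^3
      + (a+b)*((a + Real.sqrt (a*(a+8)))/(2*a))^2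
      - (a+b)*((a + Real.sqrt (a*(a+8)))/(2*a)) - 2 := by
  set s := Real.sqrt (a*(a+8)) with hsdef
  have hs2 : s^2 = a*(a+8) := Real.sq_sqrt (by positivity)
  have hs0 : 0 ≤ s := Real.sqrt_nonneg _
  set u := (a + s)/(2*a) with hudef
  have hu2 : 2*a*u = a + s := by rw [hudef]; field_simp
  have hu0 : 0 < u := by apply div_pos <;> linarith
  refine ⟨hu0, ?_⟩
  have hquad : a*u^2 - a*u - 2 = 0 := by
    have h4 : 4*a*(a*u^2 - a*u - 2) = 0 := by
      linear_combination (2*a*u + a + s - 2*a) * hu2 + hs2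
    have hne : (4:ℝ)*a ≠ 0 := by positivity
    rcases mul_eq_zero.mp h4 with h | h
    · exact absurd h hne
    · exact h
  nlinarith [hquad, mul_pos hb hu0, mul_pos (mul_pos hb hu0) hu0,
    mul_pos (mul_pos (mul_pos ha hb) hu0) hu0]

private lemma cubic_aux_lower (s m : ℝ) (hs : 0 < s) (hm : 0 < m) :
    0 < (Real.sqrt (s*(s+6*m)) - s)/(6*m) ∧
    2*m*((Real.sqrt (s*(s+6*m)) - s)/(6*m))^3 + s*((Real.sqrt (s*(s+6*m)) - s)/(6*m))^2
      - s*((Real.sqrt (s*(s+6*m)) - s)/(6*m)) - 2 < 0 := by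
  set t := Real.sqrt (s*(s+6*m)) with htdef
  have ht2 : t^2 = s*(s+6*m) := Real.sq_sqrt (by positivity)
  have ht0 : 0 ≤ t := Real.sqrt_nonneg _
  have hts : s < t := by nlinarith [mul_pos hs hm]
  set L := (t - s)/(6*m) with hLdef
  have hL0 : 0 < L := by apply div_pos <;> linarith
  refine ⟨hL0, ?_⟩
  have hLm : 6*m*L = t - s := by rw [hLdef]; field_simp
  have hL2 : 36*m^2*L^2 = (t-s)^2 := by linear_combination (6*m*L + (t-s))*hLm
  have hL3 : 216*m^3*L^3 = (t-s)^3 := by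
    linear_combination ((6*m*L)^2 + 6*m*L*(t-s) + (t-s)^2)*hLm
  have h1 : 108*m^2*(2*m*L^3 + s*L^2 - s*L - 2)
      = 2*s^3 + 18*m*s^2 - 216*m^2 - 2*t*s^2 - 12*m*s*t := by
    linear_combination hL3 + 3*s*hL2 - 18*m*s*hLm + t*ht2
  have hRHS : 2*s^3 + 18*m*s^2 - 216*m^2 - 2*t*s^2 - 12*m*s*t < 0 := by
    rcases le_or_gt (2*s^3 + 18*m*s^2) (216*m^2) with h | h
    · have ht : 0 < t := lt_trans hs hts
      nlinarith [mul_pos (mul_pos ht hs) hs, mul_pos (mul_pos hm hs) ht]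
    · have hB : 0 < 2*s^3 + 18*m*s^2 - 216*m^2 := by linarith
      have hA : 0 < 2*t*s^2 + 12*m*s*t := by
        have ht : 0 < t := lt_trans hs hts
        nlinarith [mul_pos (mul_pos ht hs) hs, mul_pos (mul_pos hm hs) ht]
      have hAsq : (2*t*s^2 + 12*m*s*t)^2 = 4*s^3*(s+6*m)^3 := by
        linear_combination (4*s^4 + 48*m*s^3 + 144*m^2*s^2) * ht2
      have hd : (2*s^3 + 18*m*s^2 - 216*m^2)^2 < (2*t*s^2 + 12*m*s*t)^2 := by
        rw [hAsq]
        nlinarith [mul_pos (by positivity : (0:ℝ) < 216*m^2) hB,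
          mul_pos (mul_pos (mul_pos (mul_pos hs hs) (mul_pos hs hs)) hm) hm,
          mul_pos (mul_pos (mul_pos hs hs) (mul_pos hs hm)) hm,
          mul_pos (mul_pos (mul_pos hs hs) (mul_pos hs hm)) (mul_pos hm hm),
          mul_pos (mul_pos (mul_pos hs hs) (mul_pos hm hm)) hm]
      nlinarith [hd, hA, hB]
  have hm2 : (0:ℝ) < 108*m^2 := by positivity
  nlinarith [h1, hRHS, hm2]

/-- For `λ₁, λ₂ > 0`, the cubic
`p₃(β) := 2λ₁λ₂β³ + (λ₁+λ₂)β² - (λ₁+λ₂)β - 2` has a unique positive root `β₊`, and it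
satisfies
`(√((λ₁+λ₂)(λ₁+λ₂+6λ₁λ₂)) - (λ₁+λ₂))/(6λ₁λ₂) < β₊ <
  min ((λ₁+√(λ₁(λ₁+8)))/(2λ₁)) ((λ₂+√(λ₂(λ₂+8)))/(2λ₂))`. -/
theorem cubic_unique_positive_root_brackets
    (l₁ l₂ : ℝ) (hl₁ : 0 < l₁) (hl₂ : 0 < l₂) :
    ∃ βp : ℝ,
      (0 < βp ∧ 2 * l₁ * l₂ * βp ^ 3 + (l₁ + l₂) * βp ^ 2 - (l₁ + l₂) * βp - 2 = 0) ∧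
      (∀ β : ℝ, 0 < β →
        2 * l₁ * l₂ * β ^ 3 + (l₁ + l₂) * β ^ 2 - (l₁ + l₂) * β - 2 = 0 → β = βp) ∧
      (Real.sqrt ((l₁ + l₂) * (l₁ + l₂ + 6 * l₁ * l₂)) - (l₁ + l₂)) / (6 * l₁ * l₂) < βp ∧
      βp < min ((l₁ + Real.sqrt (l₁ * (l₁ + 8))) / (2 * l₁))
               ((l₂ + Real.sqrt (l₂ * (l₂ + 8))) / (2 * l₂)) := by
  have hs : (0:ℝ) < l₁ + l₂ := by linarith
  have hm : 0 < l₁ * l₂ := mul_pos hl₁ hl₂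
  set f : ℝ → ℝ := fun β => 2 * l₁ * l₂ * β ^ 3 + (l₁ + l₂) * β ^ 2 - (l₁ + l₂) * β - 2
    with hfdef
  -- lower bound point
  obtain ⟨hL0', hfL'⟩ := cubic_aux_lower (l₁ + l₂) (l₁ * l₂) hs hm
  set L := (Real.sqrt ((l₁ + l₂) * (l₁ + l₂ + 6 * l₁ * l₂)) - (l₁ + l₂)) / (6 * l₁ * l₂)
    with hLdef
  have eL : (Real.sqrt ((l₁ + l₂) * (l₁ + l₂ + 6 * (l₁ * l₂))) - (l₁ + l₂)) / (6 * (l₁ * l₂))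
      = L := by
    rw [hLdef, show (l₁ + l₂) * (l₁ + l₂ + 6 * (l₁ * l₂))
      = (l₁ + l₂) * (l₁ + l₂ + 6 * l₁ * l₂) by ring]
    ring
  rw [eL] at hL0' hfL'
  have hfL : f L < 0 := by
    simp only [hfdef]
    linarith [hfL']
  -- upper bound point
  obtain ⟨hu₁0, hfu₁'⟩ := cubic_aux_upper l₁ l₂ hl₁ hl₂
  obtain ⟨hu₂0, hfu₂'⟩ := cubic_aux_upper l₂ l₁ hl₂ hl₁
  set U := min ((l₁ + Real.sqrt (l₁ * (l₁ + 8))) / (2 * l₁))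
               ((l₂ + Real.sqrt (l₂ * (l₂ + 8))) / (2 * l₂)) with hUdef
  have hU0 : 0 < U := lt_min hu₁0 hu₂0
  have hfU : 0 < f U := by
    rcases min_choice ((l₁ + Real.sqrt (l₁ * (l₁ + 8))) / (2 * l₁))
      ((l₂ + Real.sqrt (l₂ * (l₂ + 8))) / (2 * l₂)) with h | h
    · rw [hUdef, h]; simp only [hfdef]; linarith [hfu₁']
    · rw [hUdef, h]; simp only [hfdef]; linarith [hfu₂']
  -- L < U
  have hLU : L < U := by
    apply cubic_order l₁ l₂ L U hl₁ hl₂ hL0' hU0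
    · have := hfL; simp only [hfdef] at this; linarith
    · have := hfU; simp only [hfdef] at this; linarith
  -- IVT
  have hcont : Continuous f := by
    simp only [hfdef]; fun_prop
  obtain ⟨βp, hβmem, hβval⟩ :=
    intermediate_value_Ioo (le_of_lt hLU) hcont.continuousOn
      (show (0:ℝ) ∈ Set.Ioo (f L) (f U) from ⟨hfL, hfU⟩)
  have hβ0 : 0 < βp := lt_trans hL0' hβmem.1
  have hβroot : 2 * l₁ * l₂ * βp ^ 3 + (l₁ + l₂) * βp ^ 2 - (l₁ + l₂) * βp - 2 = 0 := by
    have := hβval; simp only [hfdef] at this; linarith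
  refine ⟨βp, ⟨hβ0, hβroot⟩, ?_, hβmem.1, hβmem.2⟩
  intro β hβpos hβeq
  rcases lt_trichotomy β βp with h | h | h
  · exact absurd (cubic_no_two_roots l₁ l₂ β βp hl₁ hl₂ hβpos hβ0 h
      (by linarith [hβeq]) (by linarith [hβroot])) (fun x => x)
  · exact h
  · exact absurd (cubic_no_two_roots l₁ l₂ βp β hl₁ hl₂ hβ0 hβpos h
      (by linarith [hβroot]) (by linarith [hβeq])) (fun x => x)
end

section
/- Let d ≥ 1 and λ₁,…,λ_d > 0. Define ψ : (0,∞) → ℝ by ψ(x) := (Σ_{i=1}^{d} 1/(1+xλᵢ)) / (Σ_{i=1}^{d} λᵢ/(1+xλᵢ)). Then ψ is positive, monotonically increasing, and concave on (0,∞); consequently g(x) := √(ψ(x)) is also positive, monotonically increasing, and concave on (0,∞). -/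
open Finset Set

private lemma cs_key {ι : Type*} (s : Finset ι) (u w : ι → ℝ) (hu : ∀ i ∈ s, 0 < u i) :
    (∑ i ∈ s, w i) ^ 2 ≤ (∑ i ∈ s, w i ^ 2 * u i) * (∑ i ∈ s, 1 / u i) := by
  refine Finset.sum_sq_le_sum_mul_sum_of_sq_eq_mul s
    (fun i hi => mul_nonneg (sq_nonneg _) (hu i hi).le)
    (fun i hi => le_of_lt (by have := hu i hi; positivity)) (fun i hi => ?_)
  have := (hu i hi).ne'
  field_simp

/-- Harmonic-mean concavity step. -/
private lemma harmonic_step {ι : Type*} (s : Finset ι) (hs : s.Nonempty) (u v : ι → ℝ)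
    (hu : ∀ i ∈ s, 0 < u i) (hv : ∀ i ∈ s, 0 < v i)
    (a b : ℝ) (ha : 0 ≤ a) (hb : 0 ≤ b) (hab : a + b = 1) :
    a / (∑ i ∈ s, 1 / u i) + b / (∑ i ∈ s, 1 / v i)
      ≤ 1 / (∑ i ∈ s, 1 / (a * u i + b * v i)) := by
  set c : ι → ℝ := fun i => a * u i + b * v i with hc
  have hcpos : ∀ i ∈ s, 0 < c i := by
    intro i hi
    rcases eq_or_lt_of_le ha with h | h
    · have hb1 : b = 1 := by linarith
      simp [hc, ← h, hb1, hv i hi]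
    · have h1 : 0 < a * u i := mul_pos h (hu i hi)
      have h2 : 0 ≤ b * v i := mul_nonneg hb (hv i hi).le
      show 0 < a * u i + b * v i; linarith
  have hUpos : 0 < ∑ i ∈ s, 1 / u i :=
    Finset.sum_pos (fun i hi => by have := hu i hi; positivity) hs
  have hVpos : 0 < ∑ i ∈ s, 1 / v i :=
    Finset.sum_pos (fun i hi => by have := hv i hi; positivity) hs
  have hCpos : 0 < ∑ i ∈ s, 1 / c i :=
    Finset.sum_pos (fun i hi => by have := hcpos i hi; positivity) hs
  set C := ∑ i ∈ s, 1 / c i with hC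
  set w : ι → ℝ := fun i => (1 / c i) / C with hw
  have hwsum : ∑ i ∈ s, w i = 1 := by
    rw [hw]
    simp only
    rw [← Finset.sum_div, ← hC, div_self hCpos.ne']
  have hwc : ∑ i ∈ s, w i ^ 2 * c i = 1 / C := by
    have : ∀ i ∈ s, w i ^ 2 * c i = (1 / c i) / C ^ 2 := by
      intro i hi
      have := (hcpos i hi).ne'
      field_simp [hw]
      rw [hw]
      field_simp
    rw [Finset.sum_congr rfl this, ← Finset.sum_div, ← hC]
    rw [sq]
    field_simp
  have hu' : 1 / (∑ i ∈ s, 1 / u i) ≤ ∑ i ∈ s, w i ^ 2 * u i := by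
    rw [div_le_iff₀ hUpos]
    calc (1 : ℝ) = (∑ i ∈ s, w i) ^ 2 := by rw [hwsum]; norm_num
    _ ≤ _ := cs_key s u w hu
  have hv' : 1 / (∑ i ∈ s, 1 / v i) ≤ ∑ i ∈ s, w i ^ 2 * v i := by
    rw [div_le_iff₀ hVpos]
    calc (1 : ℝ) = (∑ i ∈ s, w i) ^ 2 := by rw [hwsum]; norm_num
    _ ≤ _ := cs_key s v w hv
  have key : a * (∑ i ∈ s, w i ^ 2 * u i) + b * (∑ i ∈ s, w i ^ 2 * v i) = 1 / C := by
    rw [← hwc, Finset.mul_sum, Finset.mul_sum, ← Finset.sum_add_distrib]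
    exact Finset.sum_congr rfl (fun i hi => by show _ = w i ^ 2 * (a * u i + b * v i); ring)
  calc a / (∑ i ∈ s, 1 / u i) + b / (∑ i ∈ s, 1 / v i)
      = a * (1 / (∑ i ∈ s, 1 / u i)) + b * (1 / (∑ i ∈ s, 1 / v i)) := by ring
    _ ≤ a * (∑ i ∈ s, w i ^ 2 * u i) + b * (∑ i ∈ s, w i ^ 2 * v i) := by gcongr
    _ = 1 / C := key

private lemma pair_sum_le {ι : Type*} (s : Finset ι) (f g : ι → ι → ℝ)
    (h : ∀ i ∈ s, ∀ j ∈ s, f i j + f j i ≤ g i j + g j i) :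
    ∑ i ∈ s, ∑ j ∈ s, f i j ≤ ∑ i ∈ s, ∑ j ∈ s, g i j := by
  have hf : (2 : ℝ) * (∑ i ∈ s, ∑ j ∈ s, f i j) = ∑ i ∈ s, ∑ j ∈ s, (f i j + f j i) := by
    simp only [Finset.sum_add_distrib]
    rw [Finset.sum_comm (f := fun i j => f j i)]
    ring
  have hg : (2 : ℝ) * (∑ i ∈ s, ∑ j ∈ s, g i j) = ∑ i ∈ s, ∑ j ∈ s, (g i j + g j i) := by
    simp only [Finset.sum_add_distrib]
    rw [Finset.sum_comm (f := fun i j => g j i)]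
    ring
  have : ∑ i ∈ s, ∑ j ∈ s, (f i j + f j i) ≤ ∑ i ∈ s, ∑ j ∈ s, (g i j + g j i) :=
    Finset.sum_le_sum fun i hi => Finset.sum_le_sum fun j hj => h i hi j hj
  linarith

private lemma sqrt_concave_step {p q r a b : ℝ} (hp : 0 ≤ p) (hq : 0 ≤ q)
    (ha : 0 ≤ a) (hb : 0 ≤ b) (hab : a + b = 1) (h : a * p + b * q ≤ r) :
    a * Real.sqrt p + b * Real.sqrt q ≤ Real.sqrt r := by
  have hr : 0 ≤ r := le_trans (by positivity) h
  have hS := Real.sq_sqrt hp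
  have hT := Real.sq_sqrt hq
  have hSn := Real.sqrt_nonneg p
  have hTn := Real.sqrt_nonneg q
  have key : (a * Real.sqrt p + b * Real.sqrt q) ^ 2
      = a * p + b * q - a * b * (Real.sqrt p - Real.sqrt q) ^ 2 := by
    linear_combination a * hS + b * hT + (a * Real.sqrt p ^ 2 + b * Real.sqrt q ^ 2) * hab
  have hsq : (a * Real.sqrt p + b * Real.sqrt q) ^ 2 ≤ r := by
    have h2 : 0 ≤ a * b * (Real.sqrt p - Real.sqrt q) ^ 2 :=
      mul_nonneg (mul_nonneg ha hb) (sq_nonneg _)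
    rw [key]; linarith
  calc a * Real.sqrt p + b * Real.sqrt q
      = Real.sqrt ((a * Real.sqrt p + b * Real.sqrt q) ^ 2) :=
        (Real.sqrt_sq (by positivity)).symm
    _ ≤ Real.sqrt r := Real.sqrt_le_sqrt hsq

/-- For `d ≥ 1` and `λ₁, …, λ_d > 0`, the map
`ψ(x) := (∑ i, 1/(1+xλᵢ)) / (∑ i, λᵢ/(1+xλᵢ))` is positive, monotonically increasing and
concave on `(0, ∞)`; consequently `g := √ ∘ ψ` is also positive, monotonically increasing
and concave on `(0, ∞)`. -/
theorem psi_pos_mono_concave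
    (d : ℕ) (hd : 1 ≤ d) (lam : Fin d → ℝ) (hlam : ∀ i, 0 < lam i)
    (ψ : ℝ → ℝ)
    (hψ : ∀ x : ℝ, ψ x =
      (∑ i, 1 / (1 + x * lam i)) / (∑ i, lam i / (1 + x * lam i)))
    (g : ℝ → ℝ) (hg : ∀ x : ℝ, g x = Real.sqrt (ψ x)) :
    ((∀ x ∈ Ioi (0 : ℝ), 0 < ψ x) ∧ MonotoneOn ψ (Ioi 0) ∧ ConcaveOn ℝ (Ioi 0) ψ) ∧
    ((∀ x ∈ Ioi (0 : ℝ), 0 < g x) ∧ MonotoneOn g (Ioi 0) ∧ ConcaveOn ℝ (Ioi 0) g) := by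
  have hne : (Finset.univ : Finset (Fin d)).Nonempty := by
    rw [Finset.univ_nonempty_iff]
    exact Fin.pos_iff_nonempty.mp hd
  have hden : ∀ x : ℝ, x ∈ Ioi (0:ℝ) → ∀ i : Fin d, 0 < 1 + x * lam i := by
    intro x hx i
    have := hlam i
    have : 0 < x * lam i := mul_pos hx this
    linarith
  set N : ℝ → ℝ := fun x => ∑ i, 1 / (1 + x * lam i) with hN
  set D : ℝ → ℝ := fun x => ∑ i, lam i / (1 + x * lam i) with hD
  have hNpos : ∀ x ∈ Ioi (0:ℝ), 0 < N x := fun x hx =>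
    Finset.sum_pos (fun i _ => by have := hden x hx i; positivity) hne
  have hDpos : ∀ x ∈ Ioi (0:ℝ), 0 < D x := fun x hx =>
    Finset.sum_pos (fun i _ => by have := hden x hx i; have := hlam i; positivity) hne
  -- positivity of ψ
  have hψpos : ∀ x ∈ Ioi (0:ℝ), 0 < ψ x := by
    intro x hx
    rw [hψ x]
    exact div_pos (hNpos x hx) (hDpos x hx)
  -- monotonicity of ψ
  have hψmono : MonotoneOn ψ (Ioi 0) := by
    intro x hx y hy hxy
    rw [hψ x, hψ y, div_le_div_iff₀ (hDpos x hx) (hDpos y hy)]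
    show N x * D y ≤ N y * D x
    rw [hN, hD, Finset.sum_mul_sum, Finset.sum_mul_sum]
    refine pair_sum_le _ _ _ ?_
    intro i _ j _
    have hp := hden x hx i
    have hq := hden x hx j
    have hr := hden y hy i
    have hs := hden y hy j
    have hli := hlam i
    have hlj := hlam j
    have identity :
        (1 / (1 + y * lam i) * (lam j / (1 + x * lam j))
          + 1 / (1 + y * lam j) * (lam i / (1 + x * lam i)))
        - (1 / (1 + x * lam i) * (lam j / (1 + y * lam j))
          + 1 / (1 + x * lam j) * (lam i / (1 + y * lam i)))
        = (lam i - lam j) * (1 / ((1 + x * lam i) * (1 + y * lam j))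
            - 1 / ((1 + x * lam j) * (1 + y * lam i))) := by
      field_simp
      ring
    have hps : 0 < (1 + x * lam i) * (1 + y * lam j) := mul_pos hp hs
    have hqr : 0 < (1 + x * lam j) * (1 + y * lam i) := mul_pos hq hr
    rcases le_total (lam i) (lam j) with hij | hij
    · -- ps - qr = (y-x)(λⱼ-λᵢ) ≥ 0, so 1/ps - 1/qr ≤ 0, and λᵢ-λⱼ ≤ 0
      have hle : (1 + x * lam j) * (1 + y * lam i) ≤ (1 + x * lam i) * (1 + y * lam j) := by
        nlinarith [mul_nonneg (sub_nonneg.2 hxy) (sub_nonneg.2 hij)]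
      have h1 : 1 / ((1 + x * lam i) * (1 + y * lam j))
          - 1 / ((1 + x * lam j) * (1 + y * lam i)) ≤ 0 := by
        have := one_div_le_one_div_of_le hqr hle
        linarith
      have h2 : 0 ≤ (-(lam i - lam j)) * (-(1 / ((1 + x * lam i) * (1 + y * lam j))
          - 1 / ((1 + x * lam j) * (1 + y * lam i)))) :=
        mul_nonneg (by linarith) (by linarith)
      nlinarith [h2, identity]
    · have hle : (1 + x * lam i) * (1 + y * lam j) ≤ (1 + x * lam j) * (1 + y * lam i) := by
        nlinarith [mul_nonneg (sub_nonneg.2 hxy) (sub_nonneg.2 hij)]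
      have h1 : 0 ≤ 1 / ((1 + x * lam i) * (1 + y * lam j))
          - 1 / ((1 + x * lam j) * (1 + y * lam i)) := by
        have := one_div_le_one_div_of_le hps hle
        linarith
      nlinarith [mul_nonneg (sub_nonneg.2 hij) h1, identity]
  -- key formula : ψ x = d / D x - x on Ioi 0
  have hformula : ∀ x ∈ Ioi (0:ℝ), ψ x = d / D x - x := by
    intro x hx
    have hNid : N x = d - x * D x := by
      have h1 : N x = ∑ i, ((1:ℝ) - x * (lam i / (1 + x * lam i))) :=
        Finset.sum_congr rfl fun i _ => by
          have := (hden x hx i).ne'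
          field_simp
          ring
      rw [h1, Finset.sum_sub_distrib, ← Finset.mul_sum]
      simp [hD, Finset.card_univ]
    rw [hψ x]
    show N x / D x = d / D x - x
    rw [hNid]
    field_simp [(hDpos x hx).ne']
  -- concavity of ψ
  have hψconc : ConcaveOn ℝ (Ioi 0) ψ := by
    refine ⟨convex_Ioi 0, ?_⟩
    intro x hx y hy a b ha hb hab
    have hz : a * x + b * y ∈ Ioi (0:ℝ) := (convex_Ioi 0) hx hy ha hb hab
    simp only [smul_eq_mul]
    rw [hformula x hx, hformula y hy, hformula _ hz]
    -- reduce to harmonic mean concavity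
    set u : Fin d → ℝ := fun i => (1 + x * lam i) / lam i with hu
    set v : Fin d → ℝ := fun i => (1 + y * lam i) / lam i with hv
    have hupos : ∀ i ∈ (Finset.univ : Finset (Fin d)), 0 < u i := fun i _ =>
      div_pos (hden x hx i) (hlam i)
    have hvpos : ∀ i ∈ (Finset.univ : Finset (Fin d)), 0 < v i := fun i _ =>
      div_pos (hden y hy i) (hlam i)
    have hDu : D x = ∑ i, 1 / u i := by
      rw [hD]
      exact Finset.sum_congr rfl fun i _ => by rw [hu, one_div_div]
    have hDv : D y = ∑ i, 1 / v i := by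
      rw [hD]
      exact Finset.sum_congr rfl fun i _ => by rw [hv, one_div_div]
    have hDc : D (a * x + b * y) = ∑ i, 1 / (a * u i + b * v i) := by
      rw [hD]
      refine Finset.sum_congr rfl fun i _ => ?_
      have hlne := (hlam i).ne'
      show lam i / (1 + (a * x + b * y) * lam i)
          = 1 / (a * ((1 + x * lam i) / lam i) + b * ((1 + y * lam i) / lam i))
      rw [mul_div_assoc', mul_div_assoc', ← add_div, one_div_div,
        show a * (1 + x * lam i) + b * (1 + y * lam i)
            = 1 + (a * x + b * y) * lam i from by linear_combination hab]
    have hstep := harmonic_step Finset.univ hne u v hupos hvpos a b ha hb hab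
    rw [← hDu, ← hDv, ← hDc] at hstep
    have hd0 : (0:ℝ) ≤ d := Nat.cast_nonneg d
    have : a * (d / D x) + b * (d / D y) ≤ d / D (a * x + b * y) := by
      have := mul_le_mul_of_nonneg_left hstep hd0
      calc a * (↑d / D x) + b * (↑d / D y)
          = (d:ℝ) * (a / D x + b / D y) := by ring
        _ ≤ (d:ℝ) * (1 / D (a * x + b * y)) := this
        _ = d / D (a * x + b * y) := by ring
    calc a * (↑d / D x - x) + b * (↑d / D y - y)
        = (a * (↑d / D x) + b * (↑d / D y)) - (a * x + b * y) := by ring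
      _ ≤ ↑d / D (a * x + b * y) - (a * x + b * y) := by linarith [this]
  refine ⟨⟨hψpos, hψmono, hψconc⟩, ?_, ?_, ?_⟩
  · intro x hx
    rw [hg x]
    exact Real.sqrt_pos.2 (hψpos x hx)
  · intro x hx y hy hxy
    rw [hg x, hg y]
    exact Real.sqrt_le_sqrt (hψmono hx hy hxy)
  · refine ⟨convex_Ioi 0, ?_⟩
    intro x hx y hy a b ha hb hab
    have hz : a • x + b • y ∈ Ioi (0:ℝ) := (convex_Ioi 0) hx hy ha hb hab
    simp only [smul_eq_mul] at hz ⊢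
    rw [hg x, hg y, hg (a * x + b * y)]
    have hcon := hψconc.2 hx hy ha hb hab
    simp only [smul_eq_mul] at hcon
    exact sqrt_concave_step (hψpos x hx).le (hψpos y hy).le ha hb hab hcon
end

section
/- Let d ≥ 1 and λ₁,…,λ_d > 0, and define g : (0,∞) → (0,∞) by g(β) := ( (Σ_{i=1}^{d} 1/(1+βλᵢ)) / (Σ_{i=1}^{d} λᵢ/(1+βλᵢ)) )^{1/2}. Then g has a unique fixed point β₊ ∈ (0,∞), and for every initial guess β₀ > 0 the iterates gⁿ(β₀) converge to β₊ as n → ∞. -/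
open Finset Filter

namespace FPIaux

variable {d : ℕ}

noncomputable def Nf (lam : Fin d → ℝ) (β : ℝ) : ℝ := ∑ i, 1 / (1 + β * lam i)
noncomputable def Df (lam : Fin d → ℝ) (β : ℝ) : ℝ := ∑ i, lam i / (1 + β * lam i)

lemma den_pos {lam : Fin d → ℝ} (hlam : ∀ i, 0 < lam i) {β : ℝ} (hβ : 0 ≤ β) (i : Fin d) :
    0 < 1 + β * lam i :=
  add_pos_of_pos_of_nonneg one_pos (mul_nonneg hβ (hlam i).le)

lemma N_pos (hd : 1 ≤ d) {lam : Fin d → ℝ} (hlam : ∀ i, 0 < lam i) {β : ℝ} (hβ : 0 ≤ β) :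
    0 < Nf lam β := by
  have : Nonempty (Fin d) := ⟨⟨0, hd⟩⟩
  exact Finset.sum_pos (fun i _ => div_pos one_pos (den_pos hlam hβ i)) Finset.univ_nonempty

lemma D_pos (hd : 1 ≤ d) {lam : Fin d → ℝ} (hlam : ∀ i, 0 < lam i) {β : ℝ} (hβ : 0 ≤ β) :
    0 < Df lam β := by
  have : Nonempty (Fin d) := ⟨⟨0, hd⟩⟩
  exact Finset.sum_pos (fun i _ => div_pos (hlam i) (den_pos hlam hβ i)) Finset.univ_nonempty

/-- Cross inequality: `N β₁ * D β₂ ≤ N β₂ * D β₁` for `0 ≤ β₁ ≤ β₂`. -/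
lemma cross {lam : Fin d → ℝ} (hlam : ∀ i, 0 < lam i) {β₁ β₂ : ℝ}
    (h1 : 0 ≤ β₁) (h12 : β₁ ≤ β₂) :
    Nf lam β₁ * Df lam β₂ ≤ Nf lam β₂ * Df lam β₁ := by
  have h2 : (0:ℝ) ≤ β₂ := le_trans h1 h12
  set a₁ : Fin d → ℝ := fun i => 1 / (1 + β₁ * lam i) with ha₁
  set a₂ : Fin d → ℝ := fun i => 1 / (1 + β₂ * lam i) with ha₂
  have hq1 : ∀ i, 0 < 1 + β₁ * lam i := den_pos hlam h1
  have hq2 : ∀ i, 0 < 1 + β₂ * lam i := den_pos hlam h2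
  set F : Fin d → Fin d → ℝ := fun i j => a₂ i * (lam j * a₁ j) - a₁ i * (lam j * a₂ j) with hF
  have key : ∀ i j, 0 ≤ F i j + F j i := by
    intro i j
    have e1 : (1 + β₁ * lam i) ≠ 0 := (hq1 i).ne'
    have e2 : (1 + β₂ * lam i) ≠ 0 := (hq2 i).ne'
    have e3 : (1 + β₁ * lam j) ≠ 0 := (hq1 j).ne'
    have e4 : (1 + β₂ * lam j) ≠ 0 := (hq2 j).ne'
    have hid : F i j + F j i =
        (lam j - lam i)^2 * (β₂ - β₁) * (a₁ i * a₂ i * a₁ j * a₂ j) := by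
      simp only [hF, ha₁, ha₂]
      have h1 := mul_one_div_cancel e1
      have h2 := mul_one_div_cancel e2
      have h3 := mul_one_div_cancel e3
      have h4 := mul_one_div_cancel e4
      generalize 1 / (1 + β₁ * lam i) = x1 at h1 ⊢
      generalize 1 / (1 + β₂ * lam i) = x2 at h2 ⊢
      generalize 1 / (1 + β₁ * lam j) = x3 at h3 ⊢
      generalize 1 / (1 + β₂ * lam j) = x4 at h4 ⊢
      linear_combination (lam j - lam i) * (-(x2 * x3 * x4 * (1 + β₂ * lam j)) * h1 - x2 * x3 * h4
        + x1 * x4 * x3 * (1 + β₁ * lam j) * h2 + x1 * x4 * h3)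
    rw [hid]
    have hnn : 0 ≤ a₁ i * a₂ i * a₁ j * a₂ j :=
      mul_nonneg (mul_nonneg (mul_nonneg (div_pos one_pos (hq1 i)).le
        (div_pos one_pos (hq2 i)).le) (div_pos one_pos (hq1 j)).le)
        (div_pos one_pos (hq2 j)).le
    exact mul_nonneg (mul_nonneg (sq_nonneg _) (sub_nonneg.2 h12)) hnn
  have hsum : 0 ≤ ∑ i, ∑ j, (F i j + F j i) :=
    Finset.sum_nonneg fun i _ => Finset.sum_nonneg fun j _ => key i j
  have hsplit : ∑ i, ∑ j, (F i j + F j i)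
      = (∑ i, ∑ j, F i j) + (∑ i, ∑ j, F i j) := by
    simp only [Finset.sum_add_distrib]
    congr 1
    exact Finset.sum_comm
  have hFnn : 0 ≤ ∑ i, ∑ j, F i j := by
    rw [hsplit] at hsum; linarith
  have hD1 : Df lam β₁ = ∑ j, lam j * a₁ j := by
    simp only [Df, ha₁, mul_one_div]
  have hD2 : Df lam β₂ = ∑ j, lam j * a₂ j := by
    simp only [Df, ha₂, mul_one_div]
  have hexp : ∑ i, ∑ j, F i j
      = Nf lam β₂ * Df lam β₁ - Nf lam β₁ * Df lam β₂ := by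
    simp only [hF, Finset.sum_sub_distrib, ← Finset.mul_sum, ← Finset.sum_mul]
    rw [hD1, hD2, Nf, Nf]
  rw [hexp] at hFnn
  linarith


/-- Strict monotonicity of `β ↦ β² D(β) - N(β)` on `(0,∞)`. -/
lemma Phi_strictMono (hd : 1 ≤ d) {lam : Fin d → ℝ} (hlam : ∀ i, 0 < lam i) {β₁ β₂ : ℝ}
    (h1 : 0 < β₁) (h12 : β₁ < β₂) :
    β₁^2 * Df lam β₁ - Nf lam β₁ < β₂^2 * Df lam β₂ - Nf lam β₂ := by
  have h2 : 0 < β₂ := h1.trans h12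
  have hrw : ∀ β : ℝ, β^2 * Df lam β - Nf lam β
      = ∑ i, (β^2 * lam i - 1)/(1+β*lam i) := by
    intro β
    simp only [Df, Nf, Finset.mul_sum, ← Finset.sum_sub_distrib]
    exact Finset.sum_congr rfl fun i _ => by rw [mul_div_assoc', div_sub_div_same]
  rw [hrw, hrw]
  have : Nonempty (Fin d) := ⟨⟨0, hd⟩⟩
  apply Finset.sum_lt_sum_of_nonempty Finset.univ_nonempty
  intro i _
  have hq1 : 0 < 1 + β₁ * lam i := den_pos hlam h1.le i
  have hq2 : 0 < 1 + β₂ * lam i := den_pos hlam h2.le i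
  rw [div_lt_div_iff₀ hq1 hq2]
  nlinarith [hlam i, mul_pos (mul_pos (hlam i) (sub_pos.2 h12))
    (show (0:ℝ) < 1 + β₁ + β₂ + β₁*β₂*lam i by
      nlinarith [hlam i, mul_pos (mul_pos h1 h2) (hlam i)])]

end FPIaux

open Finset Filter FPIaux

/-- For `d ≥ 1` and `λ₁, …, λ_d > 0`, the map
`g(β) := √( (∑ i, 1/(1+βλᵢ)) / (∑ i, λᵢ/(1+βλᵢ)) )` has a unique fixed point `β₊ ∈ (0, ∞)`,
and for every initial guess `β₀ > 0` the iterates `gⁿ(β₀)` converge to `β₊` as `n → ∞`. -/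
theorem fixed_point_iteration_converges
    (d : ℕ) (hd : 1 ≤ d) (lam : Fin d → ℝ) (hlam : ∀ i, 0 < lam i)
    (g : ℝ → ℝ)
    (hg : ∀ β : ℝ, g β =
      Real.sqrt ((∑ i, 1 / (1 + β * lam i)) / (∑ i, lam i / (1 + β * lam i)))) :
    ∃ βp : ℝ, 0 < βp ∧ g βp = βp ∧
      (∀ β : ℝ, 0 < β → g β = β → β = βp) ∧
      ∀ β₀ : ℝ, 0 < β₀ → Tendsto (fun n : ℕ => g^[n] β₀) atTop (nhds βp) := by
  have hgeq : ∀ β : ℝ, g β = Real.sqrt (Nf lam β / Df lam β) := fun β => hg β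
  have hne : Nonempty (Fin d) := ⟨⟨0, hd⟩⟩
  have huneq : (Finset.univ : Finset (Fin d)).Nonempty := Finset.univ_nonempty
  have hN : ∀ β : ℝ, 0 ≤ β → 0 < Nf lam β := fun β hβ => N_pos hd hlam hβ
  have hD : ∀ β : ℝ, 0 ≤ β → 0 < Df lam β := fun β hβ => D_pos hd hlam hβ
  -- positivity of g
  have gpos : ∀ β : ℝ, 0 ≤ β → 0 < g β := by
    intro β hβ
    rw [hgeq]
    exact Real.sqrt_pos.2 (div_pos (hN β hβ) (hD β hβ))
  -- square of g
  have gsq : ∀ β : ℝ, 0 ≤ β → (g β)^2 = Nf lam β / Df lam β := by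
    intro β hβ
    rw [hgeq]
    exact Real.sq_sqrt (div_pos (hN β hβ) (hD β hβ)).le
  -- Φ β := β² D β - N β
  set Φ : ℝ → ℝ := fun β => β^2 * Df lam β - Nf lam β with hΦ
  -- translations
  have t1 : ∀ β : ℝ, 0 < β → (β ≤ g β ↔ Φ β ≤ 0) := by
    intro β hβ
    rw [show (β ≤ g β ↔ β^2 ≤ (g β)^2) from
        (pow_le_pow_iff_left₀ hβ.le (gpos β hβ.le).le two_ne_zero).symm,
      gsq β hβ.le, le_div_iff₀ (hD β hβ.le)]
    simp only [hΦ]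
    constructor <;> intro h <;> linarith
  have t2 : ∀ β : ℝ, 0 < β → (g β ≤ β ↔ 0 ≤ Φ β) := by
    intro β hβ
    rw [show (g β ≤ β ↔ (g β)^2 ≤ β^2) from
        (pow_le_pow_iff_left₀ (gpos β hβ.le).le hβ.le two_ne_zero).symm,
      gsq β hβ.le, div_le_iff₀ (hD β hβ.le)]
    simp only [hΦ]
    constructor <;> intro h <;> linarith
  -- g is monotone on [0,∞)
  have gmono : ∀ β₁ β₂ : ℝ, 0 ≤ β₁ → β₁ ≤ β₂ → g β₁ ≤ g β₂ := by
    intro β₁ β₂ h1 h12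
    rw [hgeq, hgeq]
    apply Real.sqrt_le_sqrt
    rw [div_le_div_iff₀ (hD β₁ h1) (hD β₂ (h1.trans h12))]
    have := cross hlam h1 h12
    linarith [cross hlam h1 h12]
  -- bounds for g
  set cmin : ℝ := Finset.univ.inf' huneq lam with hcmin
  set cmax : ℝ := Finset.univ.sup' huneq lam with hcmax
  have hcminpos : 0 < cmin := by
    obtain ⟨i0, _, hi0⟩ := Finset.exists_mem_eq_inf' huneq lam
    rw [hcmin, hi0]; exact hlam i0
  have hminmax : cmin ≤ cmax := by
    obtain ⟨i0, hi0mem, hi0⟩ := Finset.exists_mem_eq_inf' huneq lam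
    rw [hcmin, hi0]
    exact Finset.le_sup' lam hi0mem
  have hcmaxpos : 0 < cmax := lt_of_lt_of_le hcminpos hminmax
  have gub : ∀ β : ℝ, 0 ≤ β → g β ≤ Real.sqrt (1/cmin) := by
    intro β hβ
    rw [hgeq]
    apply Real.sqrt_le_sqrt
    rw [div_le_div_iff₀ (hD β hβ) hcminpos]
    have key : cmin * Nf lam β ≤ Df lam β := by
      rw [Nf, Finset.mul_sum]
      apply Finset.sum_le_sum
      intro i _
      rw [mul_one_div]
      exact (div_le_div_iff_of_pos_right (den_pos hlam hβ i)).2 (Finset.inf'_le lam (Finset.mem_univ i))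
    linarith
  have glb : ∀ β : ℝ, 0 ≤ β → Real.sqrt (1/cmax) ≤ g β := by
    intro β hβ
    rw [hgeq]
    apply Real.sqrt_le_sqrt
    rw [div_le_div_iff₀ hcmaxpos (hD β hβ)]
    have key : Df lam β ≤ cmax * Nf lam β := by
      rw [Nf, Finset.mul_sum]
      apply Finset.sum_le_sum
      intro i _
      rw [mul_one_div]
      exact (div_le_div_iff_of_pos_right (den_pos hlam hβ i)).2 (Finset.le_sup' lam (Finset.mem_univ i))
    linarith
  -- continuity of g at positive points
  have hcont : ∀ x : ℝ, 0 < x → ContinuousAt g x := by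
    intro x hx
    have hcN : ContinuousAt (Nf lam) x := by
      apply tendsto_finset_sum
      intro i _
      exact ContinuousAt.div continuousAt_const (by fun_prop)
        (den_pos hlam hx.le i).ne'
    have hcD : ContinuousAt (Df lam) x := by
      apply tendsto_finset_sum
      intro i _
      exact ContinuousAt.div continuousAt_const (by fun_prop)
        (den_pos hlam hx.le i).ne'
    have hcND : ContinuousAt (fun β => Nf lam β / Df lam β) x :=
      hcN.div hcD (hD x hx.le).ne'
    have : ContinuousAt (fun β => Real.sqrt (Nf lam β / Df lam β)) x :=
      Real.continuous_sqrt.continuousAt.comp hcND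
    exact this.congr (Filter.Eventually.of_forall fun β => (hgeq β).symm)
  -- existence of a fixed point via IVT
  set ε : ℝ := Real.sqrt (1/cmax) / 2 with hε
  set M : ℝ := Real.sqrt (1/cmin) + 1 with hM
  have hεpos : 0 < ε := by
    rw [hε]
    have : 0 < Real.sqrt (1/cmax) := Real.sqrt_pos.2 (by positivity)
    linarith
  have hεM : ε ≤ M := by
    have h1 : Real.sqrt (1/cmax) ≤ Real.sqrt (1/cmin) :=
      Real.sqrt_le_sqrt (by
        apply one_div_le_one_div_of_le hcminpos hminmax)
    have h2 : 0 < Real.sqrt (1/cmax) := Real.sqrt_pos.2 (by positivity)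
    rw [hε, hM]; linarith
  have hφcont : ContinuousOn (fun β => g β - β) (Set.Icc ε M) := by
    intro x hx
    exact ((hcont x (lt_of_lt_of_le hεpos hx.1)).sub continuousAt_id).continuousWithinAt
  have hφM : g M - M ≤ 0 := by
    have := gub M (by positivity)
    rw [hM] at this ⊢
    linarith
  have hφε : 0 ≤ g ε - ε := by
    have := glb ε hεpos.le
    have h2 : 0 < Real.sqrt (1/cmax) := Real.sqrt_pos.2 (by positivity)
    rw [hε] at this ⊢
    linarith
  obtain ⟨βp, hβpmem, hβpfix0⟩ :=
    intermediate_value_Icc' hεM hφcont (Set.mem_Icc.2 ⟨hφM, hφε⟩)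
  have hβppos : 0 < βp := lt_of_lt_of_le hεpos hβpmem.1
  have hfix : g βp = βp := by
    have := sub_eq_zero.mp hβpfix0
    linarith [hβpfix0]
  -- the fixed point equation in terms of Φ
  have hΦp : Φ βp = 0 :=
    le_antisymm ((t1 βp hβppos).1 hfix.ge) ((t2 βp hβppos).1 hfix.le)
  have huniq : ∀ β : ℝ, 0 < β → g β = β → β = βp := by
    intro β hβ hfixβ
    have hΦβ : Φ β = 0 :=
      le_antisymm ((t1 β hβ).1 hfixβ.ge) ((t2 β hβ).1 hfixβ.le)
    rcases lt_trichotomy β βp with h | h | h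
    · exfalso
      have h2 : Φ β < Φ βp := Phi_strictMono hd hlam hβ h
      rw [hΦβ, hΦp] at h2; exact lt_irrefl 0 h2
    · exact h
    · exfalso
      have h2 : Φ βp < Φ β := Phi_strictMono hd hlam hβppos h
      rw [hΦβ, hΦp] at h2; exact lt_irrefl 0 h2
  refine ⟨βp, hβppos, hfix, huniq, ?_⟩
  intro β₀ hβ₀
  have step_up : ∀ β : ℝ, 0 < β → β ≤ βp → β ≤ g β ∧ g β ≤ βp := by
    intro β hβ hle
    refine ⟨?_, ?_⟩
    · rw [t1 β hβ]
      rcases eq_or_lt_of_le hle with h | h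
      · rw [h, hΦp]
      · have h2 : Φ β < Φ βp := Phi_strictMono hd hlam hβ h
        rw [hΦp] at h2; exact h2.le
    · calc g β ≤ g βp := gmono β βp hβ.le hle
        _ = βp := hfix
  have step_dn : ∀ β : ℝ, 0 < β → βp ≤ β → βp ≤ g β ∧ g β ≤ β := by
    intro β hβ hle
    refine ⟨?_, ?_⟩
    · calc βp = g βp := hfix.symm
        _ ≤ g β := gmono βp β hβppos.le hle
    · rw [t2 β hβ]
      rcases eq_or_lt_of_le hle with h | h
      · rw [← h, hΦp]
      · have h2 : Φ βp < Φ β := Phi_strictMono hd hlam hβppos h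
        rw [hΦp] at h2; exact h2.le
  set u : ℕ → ℝ := fun n => g^[n] β₀ with hu
  have hu0 : u 0 = β₀ := rfl
  have husucc : ∀ n, u (n+1) = g (u n) := fun n => Function.iterate_succ_apply' g n β₀
  rcases le_total β₀ βp with hcase | hcase
  · -- increasing towards βp
    have hinv : ∀ n, 0 < u n ∧ u n ≤ βp := by
      intro n
      induction n with
      | zero => exact ⟨hβ₀, hcase⟩
      | succ n ih =>
        have hs := step_up (u n) ih.1 ih.2
        rw [husucc n]
        exact ⟨lt_of_lt_of_le ih.1 hs.1, hs.2⟩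
    have hmonu : Monotone u := monotone_nat_of_le_succ (fun n => by
      rw [husucc n]; exact (step_up (u n) (hinv n).1 (hinv n).2).1)
    have hbdd : BddAbove (Set.range u) := ⟨βp, by rintro x ⟨n, rfl⟩; exact (hinv n).2⟩
    have hconv : Tendsto u atTop (nhds (⨆ n, u n)) := tendsto_atTop_ciSup hmonu hbdd
    set L := ⨆ n, u n with hL
    have hLpos : 0 < L := lt_of_lt_of_le hβ₀ (le_ciSup hbdd 0)
    have h1 : Tendsto (fun n => g (u n)) atTop (nhds (g L)) :=
      (hcont L hLpos).tendsto.comp hconv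
    have h2 : Tendsto (fun n => u (n+1)) atTop (nhds L) :=
      hconv.comp (Filter.tendsto_add_atTop_nat 1)
    have h3 : (fun n => u (n+1)) = fun n => g (u n) := funext husucc
    have hLfix : g L = L := tendsto_nhds_unique h1 (h3 ▸ h2)
    have hLp : L = βp := huniq L hLpos hLfix
    rw [← hLp]
    exact hconv
  · -- decreasing towards βp
    have hinv : ∀ n, βp ≤ u n := by
      intro n
      induction n with
      | zero => exact hcase
      | succ n ih =>
        rw [husucc n]
        exact (step_dn (u n) (lt_of_lt_of_le hβppos ih) ih).1
    have hantu : Antitone u := antitone_nat_of_succ_le (fun n => by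
      rw [husucc n]; exact (step_dn (u n) (lt_of_lt_of_le hβppos (hinv n)) (hinv n)).2)
    have hbdd : BddBelow (Set.range u) := ⟨βp, by rintro x ⟨n, rfl⟩; exact hinv n⟩
    have hconv : Tendsto u atTop (nhds (⨅ n, u n)) := tendsto_atTop_ciInf hantu hbdd
    set L := ⨅ n, u n with hL
    have hLpos : 0 < L := lt_of_lt_of_le hβppos (le_ciInf hinv)
    have h1 : Tendsto (fun n => g (u n)) atTop (nhds (g L)) :=
      (hcont L hLpos).tendsto.comp hconv
    have h2 : Tendsto (fun n => u (n+1)) atTop (nhds L) :=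
      hconv.comp (Filter.tendsto_add_atTop_nat 1)
    have h3 : (fun n => u (n+1)) = fun n => g (u n) := funext husucc
    have hLfix : g L = L := tendsto_nhds_unique h1 (h3 ▸ h2)
    have hLp : L = βp := huniq L hLpos hLfix
    rw [← hLp]
    exact hconv
end

section
/- Let Q₁, Q₂ be real symmetric positive definite d×d matrices and q₁, q₂ ∈ ℝ^d. For β > 0 let Q(β) := (1 + 1/β)Q₁ + (1 + β)Q₂. Then for every β > 0, the Minkowski sum of the ellipsoids E(q₁,Q₁) and E(q₂,Q₂) is contained in the ellipsoid E(q₁+q₂, Q(β)); that is, for all x, y ∈ ℝ^d with (x−q₁)ᵀQ₁⁻¹(x−q₁) ≤ 1 and (y−q₂)ᵀQ₂⁻¹(y−q₂) ≤ 1, one has (x+y−q₁−q₂)ᵀ Q(β)⁻¹ (x+y−q₁−q₂) ≤ 1. -/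
open Matrix

lemma posdef_smul_aux {d : ℕ} {A : Matrix (Fin d) (Fin d) ℝ} (hA : A.PosDef)
    {c : ℝ} (hc : 0 < c) : (c • A).PosDef := by
  have hherm : (c • A).IsHermitian := by
    unfold Matrix.IsHermitian
    rw [conjTranspose_smul, hA.1.eq]
    simp
  rw [posDef_iff_dotProduct_mulVec] at hA ⊢
  refine ⟨hherm, fun x hx => ?_⟩
  have := hA.2 hx
  simp only [smul_mulVec, dotProduct_smul, smul_eq_mul]
  positivity

lemma sym_dot_aux {d : ℕ} {A : Matrix (Fin d) (Fin d) ℝ} (hA : A.IsHermitian)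
    (x y : Fin d → ℝ) : x ⬝ᵥ A *ᵥ y = y ⬝ᵥ A *ᵥ x := by
  have ht : Aᵀ = A := by
    ext i j
    have := congrFun (congrFun hA.eq i) j
    simpa using this
  rw [dotProduct_mulVec, ← mulVec_transpose, dotProduct_comm, ht]

lemma key_aux {d : ℕ} {A : Matrix (Fin d) (Fin d) ℝ} (hA : A.PosDef)
    {c : ℝ} (hc : 0 < c) (w u : Fin d → ℝ) :
    2 * (w ⬝ᵥ u) ≤ c * (w ⬝ᵥ A *ᵥ w) + (1 / c) * (u ⬝ᵥ A⁻¹ *ᵥ u) := by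
  have hdet : IsUnit A.det := hA.det_pos.ne'.isUnit
  have hAinv : A *ᵥ (A⁻¹ *ᵥ u) = u := by
    rw [mulVec_mulVec, mul_nonsing_inv _ hdet, one_mulVec]
  set s := c • w - A⁻¹ *ᵥ u with hs
  have h0 : 0 ≤ s ⬝ᵥ A *ᵥ s := by simpa using (posSemidef_iff_dotProduct_mulVec.1 hA.posSemidef).2 s
  have hexp : s ⬝ᵥ A *ᵥ s =
      c ^ 2 * (w ⬝ᵥ A *ᵥ w) - 2 * c * (w ⬝ᵥ u) + u ⬝ᵥ A⁻¹ *ᵥ u := by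
    have h1 : (A⁻¹ *ᵥ u) ⬝ᵥ A *ᵥ w = w ⬝ᵥ u := by
      rw [sym_dot_aux hA.1, hAinv]
    have h2 : (A⁻¹ *ᵥ u) ⬝ᵥ A *ᵥ (A⁻¹ *ᵥ u) = u ⬝ᵥ A⁻¹ *ᵥ u := by
      rw [hAinv, dotProduct_comm]
    rw [hs]
    simp only [sub_dotProduct, dotProduct_sub, mulVec_sub, mulVec_smul,
      smul_dotProduct, dotProduct_smul, smul_eq_mul, hAinv, h1, h2,
      dotProduct_comm (A⁻¹ *ᵥ u) u]
    ring
  rw [hexp] at h0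
  have hpos : 0 ≤ (1 / c) * (c ^ 2 * (w ⬝ᵥ A *ᵥ w) - 2 * c * (w ⬝ᵥ u) + u ⬝ᵥ A⁻¹ *ᵥ u) :=
    mul_nonneg (by positivity) h0
  have hEq : (1 / c) * (c ^ 2 * (w ⬝ᵥ A *ᵥ w) - 2 * c * (w ⬝ᵥ u) + u ⬝ᵥ A⁻¹ *ᵥ u)
      = c * (w ⬝ᵥ A *ᵥ w) + (1 / c) * (u ⬝ᵥ A⁻¹ *ᵥ u) - 2 * (w ⬝ᵥ u) := by
    field_simp
    ring
  linarith

/-- For real symmetric positive definite `d × d` matrices `Q₁, Q₂`, centers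
`q₁, q₂ ∈ ℝ^d` and any `β > 0`, the Minkowski sum of the ellipsoids `E(q₁, Q₁)` and
`E(q₂, Q₂)` is contained in the ellipsoid `E(q₁ + q₂, Q(β))`,
where `Q(β) := (1 + 1/β) Q₁ + (1 + β) Q₂`. -/
theorem minkowski_sum_subset_parametrized_ellipsoid
    (d : ℕ) (Q₁ Q₂ : Matrix (Fin d) (Fin d) ℝ)
    (hQ₁ : Q₁.PosDef) (hQ₂ : Q₂.PosDef)
    (q₁ q₂ : Fin d → ℝ) (β : ℝ) (hβ : 0 < β) :
    ∀ x y : Fin d → ℝ,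
      (x - q₁) ⬝ᵥ (Q₁⁻¹ *ᵥ (x - q₁)) ≤ 1 →
      (y - q₂) ⬝ᵥ (Q₂⁻¹ *ᵥ (y - q₂)) ≤ 1 →
      (x + y - q₁ - q₂) ⬝ᵥ (((1 + 1 / β) • Q₁ + (1 + β) • Q₂)⁻¹ *ᵥ (x + y - q₁ - q₂)) ≤ 1 := by
  intro x y hx hy
  set c₁ : ℝ := 1 + 1 / β with hc₁def
  set c₂ : ℝ := 1 + β with hc₂def
  have hc₁ : 0 < c₁ := by positivity
  have hc₂ : 0 < c₂ := by positivity
  set Q : Matrix (Fin d) (Fin d) ℝ := c₁ • Q₁ + c₂ • Q₂ with hQdef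
  have hQ : Q.PosDef := (posdef_smul_aux hQ₁ hc₁).add (posdef_smul_aux hQ₂ hc₂)
  set u := x - q₁ with hu
  set v := y - q₂ with hv
  have hz : x + y - q₁ - q₂ = u + v := by rw [hu, hv]; abel
  rw [hz]
  set z := u + v with hzdef
  set w := Q⁻¹ *ᵥ z with hw
  have hQw : Q *ᵥ w = z := by
    rw [hw, mulVec_mulVec, mul_nonsing_inv _ hQ.det_pos.ne'.isUnit, one_mulVec]
  have hzw : z ⬝ᵥ Q⁻¹ *ᵥ z = w ⬝ᵥ z := by rw [← hw, dotProduct_comm]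
  have hQexp : w ⬝ᵥ Q *ᵥ w = c₁ * (w ⬝ᵥ Q₁ *ᵥ w) + c₂ * (w ⬝ᵥ Q₂ *ᵥ w) := by
    rw [hQdef]
    simp [add_mulVec, smul_mulVec, dotProduct_add, dotProduct_smul]
  have key1 := key_aux hQ₁ hc₁ w u
  have key2 := key_aux hQ₂ hc₂ w v
  have hwz : w ⬝ᵥ z = w ⬝ᵥ u + w ⬝ᵥ v := by rw [hzdef, dotProduct_add]
  have heq : z ⬝ᵥ Q⁻¹ *ᵥ z = 2 * (w ⬝ᵥ z) - w ⬝ᵥ Q *ᵥ w := by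
    have : w ⬝ᵥ Q *ᵥ w = w ⬝ᵥ z := by rw [hQw]
    rw [hzw, this]; ring
  have hsum : (1 / c₁) + (1 / c₂) = 1 := by
    rw [hc₁def, hc₂def]
    field_simp
    ring
  calc z ⬝ᵥ Q⁻¹ *ᵥ z = 2 * (w ⬝ᵥ u) + 2 * (w ⬝ᵥ v) - (c₁ * (w ⬝ᵥ Q₁ *ᵥ w) + c₂ * (w ⬝ᵥ Q₂ *ᵥ w)) := by
        rw [heq, hwz, hQexp]; ring
    _ ≤ (1 / c₁) * (u ⬝ᵥ Q₁⁻¹ *ᵥ u) + (1 / c₂) * (v ⬝ᵥ Q₂⁻¹ *ᵥ v) := by linarith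
    _ ≤ (1 / c₁) * 1 + (1 / c₂) * 1 := by
        have h1 : 0 < 1 / c₁ := by positivity
        have h2 : 0 < 1 / c₂ := by positivity
        gcongr
    _ = 1 := by rw [mul_one, mul_one, hsum]
end
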